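/- arXiv:2210.03820 — 6 statements merged into one kernel-verified Lean document; each statement's English description precedes it below -/
import Mathlib

section
/- Let λ ∈ ℝ^m with λ_i ≥ 0 for all i and λ not identically zero, Λ = diag(λ). Let g_1,…,g_n : ℝ^m → ℝ be differentiable and Λ-quasi-homogeneous (each g_i plays the role of θ ↦ y_i f(x_i;θ)). Then every feasible point θ of the constrained problem 'minimize (1/2)‖θ‖²_{Λmax} subject to g_i(θ) ≥ 1 for all i' satisfies the Mangasarian–Fromovitz constraint qualification: taking v = Λθ, for every i with g_i(θ) = 1 one has ⟨v, ∇g_i(θ)⟩ = g_i(θ) = 1 > 0. -/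
/-- The quasi-homogeneous scaling map `θ ↦ e^{αΛ}θ`, where `Λ = diag(l)`. -/
noncomputable def qhScale {m : ℕ} (l : Fin m → ℝ) (α : ℝ)
    (θ : EuclideanSpace ℝ (Fin m)) : EuclideanSpace ℝ (Fin m) :=
  WithLp.toLp 2 fun i => Real.exp (α * l i) * θ i

/-- The tangent vector `Λθ` of the characteristic curve through `θ`. -/
def qhTangent {m : ℕ} (l : Fin m → ℝ) (θ : EuclideanSpace ℝ (Fin m)) :
    EuclideanSpace ℝ (Fin m) :=
  WithLp.toLp 2 fun i => l i * θ i

lemma qhScale_zero {m : ℕ} (l : Fin m → ℝ) (θ : EuclideanSpace ℝ (Fin m)) :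
    qhScale l 0 θ = θ := by
  ext i; simp [qhScale]

/-- The curve `α ↦ e^{αΛ}θ` has derivative `Λθ` at `α = 0`. -/
lemma hasDerivAt_qhScale {m : ℕ} (l : Fin m → ℝ) (θ : EuclideanSpace ℝ (Fin m)) :
    HasDerivAt (fun α => qhScale l α θ) (qhTangent l θ) 0 := by
  let e := (PiLp.continuousLinearEquiv 2 ℝ (fun _ : Fin m => ℝ)).symm
  have h : HasDerivAt (fun α => (fun i => Real.exp (α * l i) * θ i : Fin m → ℝ))
      (fun i => l i * θ i) 0 := by
    rw [hasDerivAt_pi]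
    intro i
    have h1 : HasDerivAt (fun α : ℝ => Real.exp (α * l i)) (Real.exp (0 * l i) * l i) 0 := by
      have := ((hasDerivAt_id (0 : ℝ)).mul_const (l i)).exp
      simpa using this
    have := h1.mul_const (θ i)
    simpa [mul_comm, mul_assoc, mul_left_comm] using this
  have := (e.hasFDerivAt.comp_hasDerivAt 0 h)
  exact this

/-- MFCQ for the quasi-homogeneous max-margin problem: at any feasible point `θ`
(i.e. `g_i(θ) ≥ 1` for all `i`), the vector `v = Λθ` satisfies
`⟨v, ∇g_i(θ)⟩ = g_i(θ) = 1 > 0` for every active constraint `i`. -/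
theorem stmt_4 {m n : ℕ} (l : Fin m → ℝ) (hl : ∀ i, 0 ≤ l i) (hl0 : l ≠ 0)
    (g : Fin n → EuclideanSpace ℝ (Fin m) → ℝ)
    (hdiff : ∀ i, Differentiable ℝ (g i))
    (hqh : ∀ i (α : ℝ) (θ : EuclideanSpace ℝ (Fin m)),
      g i (qhScale l α θ) = Real.exp α * g i θ)
    (θ : EuclideanSpace ℝ (Fin m)) (hfeas : ∀ i, 1 ≤ g i θ) :
    ∀ i, g i θ = 1 →
      inner (𝕜 := ℝ) (qhTangent l θ) (gradient (g i) θ) = g i θ ∧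
      (0 : ℝ) < inner (𝕜 := ℝ) (qhTangent l θ) (gradient (g i) θ) := by
  intro i hact
  have hcurve : HasDerivAt (fun α => g i (qhScale l α θ))
      (fderiv ℝ (g i) θ (qhTangent l θ)) 0 := by
    have hf : HasFDerivAt (g i) (fderiv ℝ (g i) θ) (qhScale l 0 θ) := by
      rw [qhScale_zero]; exact ((hdiff i) θ).hasFDerivAt
    exact hf.comp_hasDerivAt 0 (hasDerivAt_qhScale l θ)
  have hexp : HasDerivAt (fun α => g i (qhScale l α θ)) (g i θ) 0 := by
    have : HasDerivAt (fun α : ℝ => Real.exp α * g i θ) (Real.exp 0 * g i θ) 0 :=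
      (Real.hasDerivAt_exp 0).mul_const _
    simp only [Real.exp_zero, one_mul] at this
    convert this using 2
    exact hqh i _ θ
  have hkey : fderiv ℝ (g i) θ (qhTangent l θ) = g i θ := hcurve.unique hexp
  have hinner : inner (𝕜 := ℝ) (qhTangent l θ) (gradient (g i) θ) = g i θ := by
    rw [real_inner_comm, gradient, InnerProductSpace.toDual_symm_apply]
    exact hkey
  refine ⟨hinner, ?_⟩
  rw [hinner, hact]; norm_num
end

section
/- Let μ ∈ ℝ^d with ‖μ‖ = 1 and 0 < r < 1, and let B(±μ, r) denote the closed Euclidean balls of radius r centered at ±μ. The optimization problem: minimize ‖w‖ over w ∈ ℝ^d subject to ⟨w, x⟩ ≥ 1 for all x ∈ B(μ, r) and ⟨w, x⟩ ≤ −1 for all x ∈ B(−μ, r), has a unique minimizer, namely w_hom = μ/(1 − r) (in particular w_hom ∝ μ), and the robustness of this classifier, l(w_hom) = min over x ∈ B(μ,r) ∪ B(−μ,r) of the distance from x to the hyperplane {x' : ⟨w_hom, x'⟩ = 0}, equals 1 − r. -/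
open Metric

/-- Max-margin separation of two balls, homogeneous parameterization (Lemma 3,
homogeneous part): the problem `min ‖w‖ s.t. ⟨w,x⟩ ≥ 1 on B(μ,r)` and
`⟨w,x⟩ ≤ −1 on B(−μ,r)` has the unique minimizer `w_hom = μ/(1−r)`, whose
robustness (minimal distance from the data balls to the decision boundary)
equals `1 − r`. -/
theorem stmt_10 {d : ℕ} (μ : EuclideanSpace ℝ (Fin d)) (hμ : ‖μ‖ = 1)
    (r : ℝ) (hr0 : 0 < r) (hr1 : r < 1)
    (whom : EuclideanSpace ℝ (Fin d)) (hwhom : whom = (1 - r)⁻¹ • μ) :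
    ((∀ x ∈ Metric.closedBall μ r, 1 ≤ inner (𝕜 := ℝ) whom x) ∧
      (∀ x ∈ Metric.closedBall (-μ) r, inner (𝕜 := ℝ) whom x ≤ -1)) ∧
    (∀ w : EuclideanSpace ℝ (Fin d),
      ((∀ x ∈ Metric.closedBall μ r, 1 ≤ inner (𝕜 := ℝ) w x) ∧
        (∀ x ∈ Metric.closedBall (-μ) r, inner (𝕜 := ℝ) w x ≤ -1)) →
      ‖whom‖ ≤ ‖w‖ ∧ (‖w‖ = ‖whom‖ → w = whom)) ∧
    (⨅ x : (Metric.closedBall μ r ∪ Metric.closedBall (-μ) r :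
        Set (EuclideanSpace ℝ (Fin d))),
      Metric.infDist (x : EuclideanSpace ℝ (Fin d))
        {x' : EuclideanSpace ℝ (Fin d) | inner (𝕜 := ℝ) whom x' = (0 : ℝ)}) =
      1 - r := by
  have h1r : (0:ℝ) < 1 - r := by linarith
  have hμself : (inner ℝ μ μ : ℝ) = 1 := by
    rw [real_inner_self_eq_norm_sq, hμ]; norm_num
  -- key: inner ℝ μ x bounds on the two balls
  have hA : ∀ x ∈ closedBall μ r, 1 - r ≤ (inner ℝ μ x : ℝ) := by
    intro x hx
    have h1 : |(inner ℝ μ (x - μ) : ℝ)| ≤ ‖μ‖ * ‖x - μ‖ := abs_real_inner_le_norm _ _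
    have h2 : ‖x - μ‖ ≤ r := by rwa [← dist_eq_norm, ← mem_closedBall]
    have h3 : (inner ℝ μ (x - μ) : ℝ) = inner ℝ μ x - 1 := by
      rw [inner_sub_right, hμself]
    rw [h3, hμ, one_mul] at h1
    have := abs_le.mp (h1.trans h2)
    linarith [this.1]
  have hB : ∀ x ∈ closedBall (-μ) r, (inner ℝ μ x : ℝ) ≤ -(1 - r) := by
    intro x hx
    have h1 : |(inner ℝ μ (x + μ) : ℝ)| ≤ ‖μ‖ * ‖x + μ‖ := abs_real_inner_le_norm _ _
    have h2 : ‖x + μ‖ ≤ r := by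
      have := mem_closedBall.mp hx
      rwa [dist_eq_norm, sub_neg_eq_add] at this
    have h3 : (inner ℝ μ (x + μ) : ℝ) = inner ℝ μ x + 1 := by
      rw [inner_add_right, hμself]
    rw [h3, hμ, one_mul] at h1
    have := abs_le.mp (h1.trans h2)
    linarith [this.2]
  have hwμ : (inner ℝ whom μ : ℝ) = (1 - r)⁻¹ := by
    rw [hwhom, real_inner_smul_left, hμself, mul_one]
  have hnorm_whom : ‖whom‖ = (1 - r)⁻¹ := by
    rw [hwhom, norm_smul, hμ, mul_one, Real.norm_eq_abs, abs_of_pos (inv_pos.mpr h1r)]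
  refine ⟨⟨?_, ?_⟩, ?_, ?_⟩
  · -- feasibility on positive ball
    intro x hx
    have := hA x hx
    rw [hwhom, real_inner_smul_left]
    calc (1:ℝ) = (1 - r)⁻¹ * (1 - r) := by field_simp
    _ ≤ (1 - r)⁻¹ * inner ℝ μ x := by
        apply mul_le_mul_of_nonneg_left this (le_of_lt (inv_pos.mpr h1r))
  · -- feasibility on negative ball
    intro x hx
    have := hB x hx
    rw [hwhom, real_inner_smul_left]
    calc ((1 - r)⁻¹ * inner ℝ μ x : ℝ) ≤ (1 - r)⁻¹ * (-(1 - r)) := by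
          apply mul_le_mul_of_nonneg_left this (le_of_lt (inv_pos.mpr h1r))
    _ = -1 := by field_simp
  · -- optimality and uniqueness
    intro w ⟨hw1, _⟩
    have hwne : w ≠ 0 := by
      intro h
      have := hw1 μ (mem_closedBall_self hr0.le)
      rw [h] at this
      simp only [inner_zero_left] at this
      linarith
    have hwpos : (0:ℝ) < ‖w‖ := norm_pos_iff.mpr hwne
    -- the point μ - (r/‖w‖)•w is in the positive ball
    set x₀ : EuclideanSpace ℝ (Fin d) := μ - (r / ‖w‖) • w with hx₀
    have hx₀mem : x₀ ∈ closedBall μ r := by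
      rw [mem_closedBall, dist_eq_norm, hx₀]
      have : μ - (r / ‖w‖) • w - μ = -((r / ‖w‖) • w) := by abel
      rw [this, norm_neg, norm_smul, Real.norm_eq_abs,
        abs_of_pos (div_pos hr0 hwpos)]
      rw [div_mul_cancel₀ _ hwpos.ne']
    have hkey : (inner ℝ w μ : ℝ) ≥ 1 + r * ‖w‖ := by
      have := hw1 x₀ hx₀mem
      rw [hx₀, inner_sub_right, real_inner_smul_right,
        real_inner_self_eq_norm_sq] at this
      have hc : r / ‖w‖ * ‖w‖ ^ 2 = r * ‖w‖ := by
        field_simp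
      rw [hc] at this
      linarith
    have hCS : (inner ℝ w μ : ℝ) ≤ ‖w‖ := by
      have := real_inner_le_norm w μ
      rwa [hμ, mul_one] at this
    have hlb : (1 - r)⁻¹ ≤ ‖w‖ := by
      have : 1 + r * ‖w‖ ≤ ‖w‖ := le_trans hkey hCS
      rw [inv_eq_one_div, div_le_iff₀ h1r]
      nlinarith
    constructor
    · rw [hnorm_whom]; exact hlb
    · intro heq
      rw [hnorm_whom] at heq
      have heq2 : (inner ℝ w μ : ℝ) = ‖w‖ * ‖μ‖ := by
        rw [hμ, mul_one]
        have : (1:ℝ) + r * ‖w‖ = (1 - r)⁻¹ := by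
          rw [heq]; field_simp; ring
        refine le_antisymm hCS ?_
        rw [heq, ← this]; exact hkey
      have := inner_eq_norm_mul_iff_real.mp heq2
      rw [hμ, one_smul, heq] at this
      rw [this, hwhom]
  · -- robustness
    -- the decision boundary set
    set S : Set (EuclideanSpace ℝ (Fin d)) :=
      {x' | inner (𝕜 := ℝ) whom x' = (0 : ℝ)} with hS
    have hSiff : ∀ x', x' ∈ S ↔ (inner ℝ μ x' : ℝ) = 0 := by
      intro x'
      rw [hS, Set.mem_setOf_eq, hwhom, real_inner_smul_left]
      constructor
      · intro h
        rcases mul_eq_zero.mp h with h | h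
        · exact absurd h (by positivity)
        · exact h
      · intro h; rw [h, mul_zero]
    have hSne : S.Nonempty := ⟨0, by simp [hS]⟩
    -- distance formula
    have hdist : ∀ x : EuclideanSpace ℝ (Fin d),
        infDist x S = |(inner ℝ μ x : ℝ)| := by
      intro x
      refine le_antisymm ?_ ?_
      · -- upper bound via projection point
        have hmem : x - (inner ℝ μ x : ℝ) • μ ∈ S := by
          rw [hSiff, inner_sub_right, real_inner_smul_right, hμself, mul_one, sub_self]
        have := infDist_le_dist_of_mem (x := x) hmem
        rwa [dist_eq_norm, sub_sub_cancel, norm_smul, Real.norm_eq_abs, hμ, mul_one]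
          at this
      · -- lower bound
        by_contra h
        push_neg at h
        obtain ⟨y, hyS, hyd⟩ := (infDist_lt_iff hSne).mp h
        have h0 : (inner ℝ μ y : ℝ) = 0 := (hSiff y).mp hyS
        have h1 : |(inner ℝ μ (x - y) : ℝ)| ≤ ‖μ‖ * ‖x - y‖ := abs_real_inner_le_norm _ _
        rw [inner_sub_right, h0, sub_zero, hμ, one_mul, ← dist_eq_norm] at h1
        linarith
    -- now compute the infimum
    have hne : ((closedBall μ r ∪ closedBall (-μ) r :
        Set (EuclideanSpace ℝ (Fin d)))).Nonempty :=
      ⟨μ, Or.inl (mem_closedBall_self hr0.le)⟩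
    haveI : Nonempty ((closedBall μ r ∪ closedBall (-μ) r :
        Set (EuclideanSpace ℝ (Fin d)))) := hne.to_subtype
    refine le_antisymm ?_ ?_
    · -- inf ≤ 1 - r, witness (1-r)•μ
      have hmem : ((1 - r) • μ : EuclideanSpace ℝ (Fin d)) ∈
          closedBall μ r ∪ closedBall (-μ) r := by
        left
        rw [mem_closedBall, dist_eq_norm]
        have : ((1 - r) • μ : EuclideanSpace ℝ (Fin d)) - μ = (-r) • μ := by
          rw [sub_smul, one_smul]
          module
        rw [this, norm_smul, Real.norm_eq_abs, abs_neg, abs_of_pos hr0, hμ, mul_one]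
      have hbdd : BddBelow (Set.range fun x : (closedBall μ r ∪ closedBall (-μ) r :
          Set (EuclideanSpace ℝ (Fin d))) =>
          infDist (x : EuclideanSpace ℝ (Fin d)) S) := by
        refine ⟨0, ?_⟩
        rintro _ ⟨x, rfl⟩
        exact infDist_nonneg
      have := ciInf_le hbdd (⟨(1 - r) • μ, hmem⟩ : (closedBall μ r ∪ closedBall (-μ) r :
          Set (EuclideanSpace ℝ (Fin d))))
      refine le_trans this ?_
      rw [hdist, real_inner_smul_right, hμself, mul_one, abs_of_pos h1r]
    · -- 1 - r ≤ inf
      refine le_ciInf ?_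
      rintro ⟨x, hx | hx⟩
      · rw [hdist]
        have := hA x hx
        calc (1 - r : ℝ) ≤ inner ℝ μ x := this
        _ ≤ |(inner ℝ μ x : ℝ)| := le_abs_self _
      · rw [hdist]
        have := hB x hx
        calc (1 - r : ℝ) ≤ -(inner ℝ μ x : ℝ) := by linarith
        _ ≤ |(inner ℝ μ x : ℝ)| := neg_le_abs _
end

section
/- Let μ ∈ ℝ^d with ‖μ‖ = 1, let P be an orthogonal projection on ℝ^d with P_⊥ = I − P, set ρ = ‖P_⊥ μ‖, and assume ρ < r < 1. Let B(±μ, r) denote the closed Euclidean balls of radius r centered at ±μ. The optimization problem: minimize ‖Pw‖ over w ∈ ℝ^d subject to ⟨w, x⟩ ≥ 1 for all x ∈ B(μ, r) and ⟨w, x⟩ ≤ −1 for all x ∈ B(−μ, r), has a unique minimizer w_qh = (√(1−ρ²) − r√(1−ρ²/r²))^{−1} · ( Pμ/√(1−ρ²) + P_⊥μ/(r√(1−ρ²/r²)) ), which is proportional to √((1 − r^{−2}ρ²)/(1 − ρ²)) · Pμ + r^{−1} P_⊥μ, and its robustness l(w_qh) = min over x ∈ B(μ,r) ∪ B(−μ,r)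 of the distance from x to {x' : ⟨w_qh, x'⟩ = 0} equals √(1 − r^{−2}ρ²) · (√(1 − ρ²) − √(r² − ρ²)). -/
set_option maxHeartbeats 1000000

lemma infDist_hyperplane' {E : Type*} [NormedAddCommGroup E] [InnerProductSpace ℝ E]
    (w x : E) (hw : w ≠ 0) :
    Metric.infDist x {x' : E | inner (𝕜 := ℝ) w x' = (0:ℝ)} =
      |inner (𝕜 := ℝ) w x| / ‖w‖ := by
  have hwn : (0:ℝ) < ‖w‖ := norm_pos_iff.mpr hw
  set c : ℝ := inner (𝕜 := ℝ) w x / ‖w‖^2 with hc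
  have hmem : x - c • w ∈ {x' : E | inner (𝕜 := ℝ) w x' = (0:ℝ)} := by
    simp only [Set.mem_setOf_eq, inner_sub_right, real_inner_smul_right,
      real_inner_self_eq_norm_sq, hc]
    field_simp
    ring
  apply le_antisymm
  · refine le_trans (Metric.infDist_le_dist_of_mem hmem) (le_of_eq ?_)
    rw [dist_eq_norm]
    have : x - (x - c • w) = c • w := by abel
    rw [this, norm_smul, Real.norm_eq_abs, hc, abs_div,
      abs_of_nonneg (by positivity : (0:ℝ) ≤ ‖w‖^2)]
    field_simp
  · have hne : Nonempty {x' : E | inner (𝕜 := ℝ) w x' = (0:ℝ)} := ⟨⟨0, by simp⟩⟩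
    rw [Metric.infDist_eq_iInf]
    apply le_ciInf
    intro y
    have hy : inner (𝕜 := ℝ) w (y : E) = (0:ℝ) := y.2
    have h1 : |inner (𝕜 := ℝ) w x| = |inner (𝕜 := ℝ) w (x - (y:E))| := by
      rw [inner_sub_right, hy, sub_zero]
    rw [div_le_iff₀ hwn, h1, dist_eq_norm]
    calc |inner (𝕜 := ℝ) w (x - (y:E))| ≤ ‖w‖ * ‖x - (y:E)‖ := abs_real_inner_le_norm _ _
    _ = ‖x - (y:E)‖ * ‖w‖ := mul_comm _ _

/-- Max-margin separation of two balls, quasi-homogeneous parameterization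
(Lemma 3, quasi-homogeneous part): the problem `min ‖Pw‖` subject to the margin
constraints on the two balls has a unique minimizer `w_qh`, which is
proportional to `√((1−r⁻²ρ²)/(1−ρ²))·Pμ + r⁻¹·P⊥μ`, and whose robustness
equals `√(1−r⁻²ρ²)(√(1−ρ²) − √(r²−ρ²))`. -/
theorem stmt_11 {d : ℕ} (μ : EuclideanSpace ℝ (Fin d)) (hμ : ‖μ‖ = 1)
    (P : EuclideanSpace ℝ (Fin d) →L[ℝ] EuclideanSpace ℝ (Fin d))
    (hPidem : ∀ x, P (P x) = P x)
    (hPsymm : ∀ x y, inner (𝕜 := ℝ) (P x) y = inner (𝕜 := ℝ) x (P y))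
    (ρ : ℝ) (hρ : ρ = ‖μ - P μ‖)
    (r : ℝ) (hρr : ρ < r) (hr1 : r < 1)
    (wqh : EuclideanSpace ℝ (Fin d))
    (hwqh : wqh = (Real.sqrt (1 - ρ ^ 2) - r * Real.sqrt (1 - ρ ^ 2 / r ^ 2))⁻¹ •
      ((Real.sqrt (1 - ρ ^ 2))⁻¹ • P μ +
        (r * Real.sqrt (1 - ρ ^ 2 / r ^ 2))⁻¹ • (μ - P μ))) :
    ((∀ x ∈ Metric.closedBall μ r, 1 ≤ inner (𝕜 := ℝ) wqh x) ∧
      (∀ x ∈ Metric.closedBall (-μ) r, inner (𝕜 := ℝ) wqh x ≤ -1)) ∧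
    (∀ w : EuclideanSpace ℝ (Fin d),
      ((∀ x ∈ Metric.closedBall μ r, 1 ≤ inner (𝕜 := ℝ) w x) ∧
        (∀ x ∈ Metric.closedBall (-μ) r, inner (𝕜 := ℝ) w x ≤ -1)) →
      ‖P wqh‖ ≤ ‖P w‖ ∧ (‖P w‖ = ‖P wqh‖ → w = wqh)) ∧
    (∃ c : ℝ, 0 < c ∧
      wqh = c • (Real.sqrt ((1 - ρ ^ 2 / r ^ 2) / (1 - ρ ^ 2)) • P μ +
        r⁻¹ • (μ - P μ))) ∧
    (⨅ x : (Metric.closedBall μ r ∪ Metric.closedBall (-μ) r :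
        Set (EuclideanSpace ℝ (Fin d))),
      Metric.infDist (x : EuclideanSpace ℝ (Fin d))
        {x' : EuclideanSpace ℝ (Fin d) | inner (𝕜 := ℝ) wqh x' = (0 : ℝ)}) =
      Real.sqrt (1 - ρ ^ 2 / r ^ 2) *
        (Real.sqrt (1 - ρ ^ 2) - Real.sqrt (r ^ 2 - ρ ^ 2)) := by
  have hρ0 : 0 ≤ ρ := hρ ▸ norm_nonneg _
  have hr0 : 0 < r := lt_of_le_of_lt hρ0 hρr
  set a := Real.sqrt (1 - ρ ^ 2) with ha
  set b := Real.sqrt (r ^ 2 - ρ ^ 2) with hb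
  have ha2 : a ^ 2 = 1 - ρ ^ 2 := Real.sq_sqrt (by nlinarith)
  have hb2 : b ^ 2 = r ^ 2 - ρ ^ 2 := Real.sq_sqrt (by nlinarith)
  have hapos : 0 < a := Real.sqrt_pos.mpr (by nlinarith)
  have hbpos : 0 < b := Real.sqrt_pos.mpr (by nlinarith)
  have hba : b < a := by
    have h := Real.sqrt_lt_sqrt (by nlinarith : (0:ℝ) ≤ r ^ 2 - ρ ^ 2)
      (by nlinarith : r ^ 2 - ρ ^ 2 < 1 - ρ ^ 2)
    rw [← ha, ← hb] at h; exact h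
  have hab : 0 < a - b := by linarith
  have hsq1 : Real.sqrt (1 - ρ ^ 2 / r ^ 2) = b / r := by
    rw [show (1 - ρ ^ 2 / r ^ 2) = (r ^ 2 - ρ ^ 2) / r ^ 2 by field_simp,
      Real.sqrt_div (by nlinarith) , Real.sqrt_sq hr0.le, hb]
  have hrb : r * Real.sqrt (1 - ρ ^ 2 / r ^ 2) = b := by
    rw [hsq1]; field_simp
  have hwqh' : wqh = (a - b)⁻¹ • (a⁻¹ • P μ + b⁻¹ • (μ - P μ)) := by
    rw [hwqh, hrb]
  -- projection identities
  have hPP : ∀ w z : EuclideanSpace ℝ (Fin d),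
      inner (𝕜 := ℝ) (P w) (P z) = inner (𝕜 := ℝ) w (P z) := by
    intro w z; rw [hPsymm, hPidem]
  have hperp : ∀ w z : EuclideanSpace ℝ (Fin d),
      inner (𝕜 := ℝ) (P w) (z - P z) = (0:ℝ) := by
    intro w z
    rw [inner_sub_right, hPsymm w z, hPP w z, sub_self]
  have hperp' : ∀ w z : EuclideanSpace ℝ (Fin d),
      inner (𝕜 := ℝ) (w - P w) (P z) = (0:ℝ) := by
    intro w z
    rw [real_inner_comm, inner_sub_right, hPsymm z w, hPP z w, sub_self]
  have hdecomp : ∀ w : EuclideanSpace ℝ (Fin d), inner (𝕜 := ℝ) w μ =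
      inner (𝕜 := ℝ) (P w) (P μ) + inner (𝕜 := ℝ) (w - P w) (μ - P μ) := by
    intro w
    have h1 := hperp w μ
    have h2 := hperp' w μ
    rw [inner_sub_right] at h1
    rw [inner_sub_left] at h2
    rw [inner_sub_left, inner_sub_right, inner_sub_right]
    linarith only [h1, h2]
  have hnormsq : ∀ w : EuclideanSpace ℝ (Fin d),
      ‖w‖ ^ 2 = ‖P w‖ ^ 2 + ‖w - P w‖ ^ 2 := by
    intro w
    have h0 := hperp w w
    have h1 : w = P w + (w - P w) := by abel
    calc ‖w‖ ^ 2 = ‖P w + (w - P w)‖ ^ 2 := by rw [← h1]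
    _ = ‖P w‖ ^ 2 + 2 * inner (𝕜 := ℝ) (P w) (w - P w) + ‖w - P w‖ ^ 2 :=
      norm_add_sq_real _ _
    _ = ‖P w‖ ^ 2 + ‖w - P w‖ ^ 2 := by rw [h0]; ring
  -- norms of components of μ
  have hnusq : ‖P μ‖ ^ 2 = a ^ 2 := by
    have := hnormsq μ
    rw [hμ, ← hρ] at this
    rw [ha2]; linarith
  have hnu : ‖P μ‖ = a := by
    rw [← Real.sqrt_sq (norm_nonneg (P μ)), hnusq, Real.sqrt_sq hapos.le]
  have huu : inner (𝕜 := ℝ) (P μ) (P μ) = a ^ 2 := by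
    rw [real_inner_self_eq_norm_sq, hnu]
  have hvv : inner (𝕜 := ℝ) (μ - P μ) (μ - P μ) = ρ ^ 2 := by
    rw [real_inner_self_eq_norm_sq, ← hρ]
  have huv := hperp μ μ
  have hvu := hperp' μ μ
  have huμ : inner (𝕜 := ℝ) (P μ) μ = a ^ 2 := by
    have := hperp μ μ
    rw [inner_sub_right, huu] at this
    linarith
  have hvμ : inner (𝕜 := ℝ) (μ - P μ) μ = ρ ^ 2 := by
    have h1 : inner (𝕜 := ℝ) (μ - P μ) μ
        = inner (𝕜 := ℝ) (μ - P μ) (P μ) + inner (𝕜 := ℝ) (μ - P μ) (μ - P μ) := by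
      rw [inner_sub_right]; ring
    rw [h1, hvu, hvv]; ring
  -- key quantities for wqh
  have hwμ : inner (𝕜 := ℝ) wqh μ = (a - b)⁻¹ * (a + ρ ^ 2 / b) := by
    rw [hwqh', real_inner_smul_left, inner_add_left, real_inner_smul_left,
      real_inner_smul_left, huμ, hvμ]
    field_simp
  have hww : inner (𝕜 := ℝ) wqh wqh = ((a - b)⁻¹ * (r / b)) ^ 2 := by
    rw [hwqh']
    simp only [real_inner_smul_left, real_inner_smul_right, inner_add_left,
      inner_add_right, huu, hvv, huv, hvu]
    have hρ2 : ρ ^ 2 = r ^ 2 - b ^ 2 := by linarith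
    rw [hρ2]
    field_simp
    ring
  have hwn : ‖wqh‖ = (a - b)⁻¹ * (r / b) := by
    rw [← Real.sqrt_sq (norm_nonneg wqh), ← real_inner_self_eq_norm_sq, hww,
      Real.sqrt_sq (by positivity)]
  have hkey1 : inner (𝕜 := ℝ) wqh μ - r * ‖wqh‖ = 1 := by
    rw [hwμ, hwn]
    have hρ2 : ρ ^ 2 = r ^ 2 - b ^ 2 := by linarith
    rw [hρ2]
    field_simp
    ring
  have hwqhpos : 0 < ‖wqh‖ := by rw [hwn]; positivity
  have hwqhne : wqh ≠ 0 := by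
    intro h; rw [h, norm_zero] at hwqhpos; exact lt_irrefl _ hwqhpos
  -- feasibility: margin implies ball constraints
  have hfeas1 : ∀ w : EuclideanSpace ℝ (Fin d), 1 ≤ inner (𝕜 := ℝ) w μ - r * ‖w‖ →
      ((∀ x ∈ Metric.closedBall μ r, 1 ≤ inner (𝕜 := ℝ) w x) ∧
        (∀ x ∈ Metric.closedBall (-μ) r, inner (𝕜 := ℝ) w x ≤ -1)) := by
    intro w hw
    have hcomm : r * ‖w‖ = ‖w‖ * r := mul_comm _ _
    constructor
    · intro x hx
      have hxd : ‖x - μ‖ ≤ r := by rwa [Metric.mem_closedBall, dist_eq_norm] at hx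
      have h1 : inner (𝕜 := ℝ) w (x - μ) = inner (𝕜 := ℝ) w x - inner (𝕜 := ℝ) w μ :=
        inner_sub_right _ _ _
      have h2 : |inner (𝕜 := ℝ) w (x - μ)| ≤ ‖w‖ * ‖x - μ‖ := abs_real_inner_le_norm _ _
      have h3 : ‖w‖ * ‖x - μ‖ ≤ ‖w‖ * r := mul_le_mul_of_nonneg_left hxd (norm_nonneg w)
      have h4 := neg_abs_le (inner (𝕜 := ℝ) w (x - μ))
      linarith
    · intro x hx
      have hxd : ‖x + μ‖ ≤ r := by
        rw [Metric.mem_closedBall, dist_eq_norm, sub_neg_eq_add] at hx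
        exact hx
      have h1 : inner (𝕜 := ℝ) w (x + μ) = inner (𝕜 := ℝ) w x + inner (𝕜 := ℝ) w μ :=
        inner_add_right _ _ _
      have h2 : |inner (𝕜 := ℝ) w (x + μ)| ≤ ‖w‖ * ‖x + μ‖ := abs_real_inner_le_norm _ _
      have h3 : ‖w‖ * ‖x + μ‖ ≤ ‖w‖ * r := mul_le_mul_of_nonneg_left hxd (norm_nonneg w)
      have h4 := le_abs_self (inner (𝕜 := ℝ) w (x + μ))
      linarith
  -- ball constraints imply margin
  have hfeas2 : ∀ w : EuclideanSpace ℝ (Fin d),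
      (∀ x ∈ Metric.closedBall μ r, 1 ≤ inner (𝕜 := ℝ) w x) →
      1 ≤ inner (𝕜 := ℝ) w μ - r * ‖w‖ := by
    intro w hw
    by_cases hw0 : w = 0
    · exfalso
      have := hw μ (Metric.mem_closedBall_self hr0.le)
      rw [hw0] at this
      simp at this
      linarith
    · have hwn0 : (0:ℝ) < ‖w‖ := norm_pos_iff.mpr hw0
      have hx0 : μ - (r / ‖w‖) • w ∈ Metric.closedBall μ r := by
        rw [Metric.mem_closedBall, dist_eq_norm]
        have : μ - (r / ‖w‖) • w - μ = -((r / ‖w‖) • w) := by abel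
        rw [this, norm_neg, norm_smul, Real.norm_eq_abs,
          abs_of_nonneg (by positivity : (0:ℝ) ≤ r / ‖w‖)]
        rw [div_mul_cancel₀ _ hwn0.ne']
      have h1 := hw _ hx0
      rw [inner_sub_right, real_inner_smul_right, real_inner_self_eq_norm_sq] at h1
      have h2 : r / ‖w‖ * ‖w‖ ^ 2 = r * ‖w‖ := by
        field_simp
      linarith [h1, h2.symm.le]
  refine ⟨hfeas1 wqh hkey1.ge, ?_, ?_, ?_⟩
  · -- minimality and uniqueness
    intro w ⟨hc1, _⟩
    have hw1 : 1 ≤ inner (𝕜 := ℝ) w μ - r * ‖w‖ := hfeas2 w hc1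
    have hPwqh : P wqh = ((a - b)⁻¹ * a⁻¹) • P μ := by
      rw [hwqh']
      rw [map_smul, map_add, map_smul, map_smul, map_sub, hPidem, sub_self,
        smul_zero, add_zero, smul_smul]
    have hnPwqh : ‖P wqh‖ = (a - b)⁻¹ := by
      rw [hPwqh, norm_smul, Real.norm_eq_abs, hnu,
        abs_of_pos (by positivity : (0:ℝ) < (a - b)⁻¹ * a⁻¹)]
      field_simp
    have hs0 : 0 ≤ ‖P w‖ := norm_nonneg _
    have ht0 : 0 ≤ ‖w - P w‖ := norm_nonneg _
    have hw0 : 0 ≤ ‖w‖ := norm_nonneg _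
    have hcs1 : inner (𝕜 := ℝ) (P w) (P μ) ≤ ‖P w‖ * a := by
      calc inner (𝕜 := ℝ) (P w) (P μ) ≤ ‖P w‖ * ‖P μ‖ := real_inner_le_norm _ _
      _ = ‖P w‖ * a := by rw [hnu]
    have hcs2 : inner (𝕜 := ℝ) (w - P w) (μ - P μ) ≤ ‖w - P w‖ * ρ := by
      calc inner (𝕜 := ℝ) (w - P w) (μ - P μ) ≤ ‖w - P w‖ * ‖μ - P μ‖ :=
        real_inner_le_norm _ _
      _ = ‖w - P w‖ * ρ := by rw [← hρ]
    have hnw2 : ‖w‖ ^ 2 = ‖P w‖ ^ 2 + ‖w - P w‖ ^ 2 := hnormsq w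
    have hq2' : (‖P w‖ * b + ‖w - P w‖ * ρ) ^ 2 + (‖P w‖ * ρ - ‖w - P w‖ * b) ^ 2
        = (r * ‖w‖) ^ 2 := by
      linear_combination (-(r ^ 2)) * hnw2 + (‖P w‖ ^ 2 + ‖w - P w‖ ^ 2) * hb2
    have hq2 : (‖P w‖ * b + ‖w - P w‖ * ρ) ^ 2 ≤ (r * ‖w‖) ^ 2 := by
      linarith only [sq_nonneg (‖P w‖ * ρ - ‖w - P w‖ * b), hq2']
    have hq : ‖P w‖ * b + ‖w - P w‖ * ρ ≤ r * ‖w‖ := by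
      have h1 : 0 ≤ ‖P w‖ * b + ‖w - P w‖ * ρ :=
        add_nonneg (mul_nonneg hs0 hbpos.le) (mul_nonneg ht0 hρ0)
      have h2 : 0 ≤ r * ‖w‖ := mul_nonneg hr0.le hw0
      have h3 := Real.sqrt_le_sqrt hq2
      rwa [Real.sqrt_sq h1, Real.sqrt_sq h2] at h3
    have hdec := hdecomp w
    have hkey : 1 ≤ ‖P w‖ * a - ‖P w‖ * b := by
      linarith only [hw1, hdec, hcs1, hcs2, hq]
    constructor
    · rw [hnPwqh, ← one_div, div_le_iff₀ hab]
      have hring : ‖P w‖ * (a - b) = ‖P w‖ * a - ‖P w‖ * b := by ring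
      linarith only [hkey, hring]
    · intro heq
      have hseq : ‖P w‖ = (a - b)⁻¹ := heq.trans hnPwqh
      have hsab : ‖P w‖ * a - ‖P w‖ * b = 1 := by
        rw [hseq]; field_simp
      have e1 : inner (𝕜 := ℝ) (P w) (P μ) = ‖P w‖ * a :=
        le_antisymm hcs1 (by linarith only [hw1, hdec, hcs2, hq, hsab])
      have e2 : inner (𝕜 := ℝ) (w - P w) (μ - P μ) = ‖w - P w‖ * ρ :=
        le_antisymm hcs2 (by linarith only [hw1, hdec, hcs1, hq, hsab])
      have e3 : r * ‖w‖ = ‖P w‖ * b + ‖w - P w‖ * ρ :=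
        le_antisymm (by linarith only [hw1, hdec, hcs1, hcs2, hsab]) hq
      have e3sq : (r * ‖w‖) ^ 2 = (‖P w‖ * b + ‖w - P w‖ * ρ) ^ 2 := by rw [e3]
      have e4sq : (‖P w‖ * ρ - ‖w - P w‖ * b) ^ 2 = 0 := by
        linarith only [hq2', e3sq]
      have e4 : ‖P w‖ * ρ = ‖w - P w‖ * b := by
        have h5 : ‖P w‖ * ρ - ‖w - P w‖ * b = 0 := by
          have := sq_eq_zero_iff.mp e4sq
          exact this
        linarith only [h5]
      have e1' : inner (𝕜 := ℝ) (P w) (P μ) = ‖P w‖ * ‖P μ‖ := by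
        rw [hnu]; exact e1
      have hPw : ‖P μ‖ • P w = ‖P w‖ • P μ := inner_eq_norm_mul_iff_real.mp e1'
      have hPw2 : P w = (‖P w‖ * a⁻¹) • P μ := by
        rw [hnu] at hPw
        have h6 := congrArg (fun z => a⁻¹ • z) hPw
        simp only [smul_smul] at h6
        rw [inv_mul_cancel₀ hapos.ne', one_smul] at h6
        conv_lhs => rw [h6]
        rw [mul_comm]
      have e2' : inner (𝕜 := ℝ) (w - P w) (μ - P μ) = ‖w - P w‖ * ‖μ - P μ‖ := by
        rw [← hρ]; exact e2
      have hVw : ‖μ - P μ‖ • (w - P w) = ‖w - P w‖ • (μ - P μ) :=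
        inner_eq_norm_mul_iff_real.mp e2'
      have hVw2 : w - P w = (‖P w‖ * b⁻¹) • (μ - P μ) := by
        rw [← hρ] at hVw
        by_cases hρz : ρ = 0
        · have hv0 : μ - P μ = 0 := by
            rw [← norm_eq_zero, ← hρ, hρz]
          have htz : ‖w - P w‖ = 0 := by
            have h7 : ‖w - P w‖ * b = 0 := by rw [← e4, hρz, mul_zero]
            rcases mul_eq_zero.mp h7 with h | h
            · exact h
            · exact absurd h hbpos.ne'
          have h8 : w - P w = 0 := norm_eq_zero.mp htz
          rw [h8, hv0, smul_zero]
        · have hρpos : 0 < ρ := lt_of_le_of_ne hρ0 (Ne.symm hρz)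
          have h6 := congrArg (fun z => ρ⁻¹ • z) hVw
          simp only [smul_smul] at h6
          rw [inv_mul_cancel₀ hρpos.ne', one_smul] at h6
          rw [h6]
          congr 1
          field_simp
          linarith only [e4]
      have hwsum : w = P w + (w - P w) := by abel
      have final : w = (‖P w‖ * a⁻¹) • P μ + (‖P w‖ * b⁻¹) • (μ - P μ) := by
        conv_lhs => rw [hwsum]
        rw [← hPw2, ← hVw2]
      rw [final, hseq, hwqh']
      simp only [smul_add, smul_smul]
  · -- proportionality
    refine ⟨r / ((a - b) * b), by positivity, ?_⟩
    have hsq3 : Real.sqrt ((1 - ρ ^ 2 / r ^ 2) / (1 - ρ ^ 2)) = b / (r * a) := by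
      have h1 : (1 - ρ ^ 2 / r ^ 2) / (1 - ρ ^ 2) = (b / (r * a)) ^ 2 := by
        rw [div_pow, mul_pow, hb2, ha2]
        field_simp
      rw [h1, Real.sqrt_sq (by positivity)]
    rw [hwqh', hsq3]
    have c1 : r / ((a - b) * b) * (b / (r * a)) = (a - b)⁻¹ * a⁻¹ := by
      field_simp
    have c2 : r / ((a - b) * b) * r⁻¹ = (a - b)⁻¹ * b⁻¹ := by
      field_simp
    rw [smul_add, smul_add, smul_smul, smul_smul, smul_smul, smul_smul, c1, c2]
  · -- robustness infimum
    have hconstr := hfeas1 wqh hkey1.ge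
    have hlow : ∀ x ∈ (Metric.closedBall μ r ∪ Metric.closedBall (-μ) r :
        Set (EuclideanSpace ℝ (Fin d))), 1 / ‖wqh‖ ≤ Metric.infDist x
          {x' : EuclideanSpace ℝ (Fin d) | inner (𝕜 := ℝ) wqh x' = (0 : ℝ)} := by
      intro x hx
      rw [infDist_hyperplane' wqh x hwqhne]
      have h1 : 1 ≤ |inner (𝕜 := ℝ) wqh x| := by
        rcases hx with hx | hx
        · exact le_trans (hconstr.1 x hx) (le_abs_self _)
        · have h2 := hconstr.2 x hx
          have h3 := neg_le_abs (inner (𝕜 := ℝ) wqh x)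
          linarith only [h2, h3]
      gcongr
    -- the witness point
    have hx0mem : μ - (r / ‖wqh‖) • wqh ∈ Metric.closedBall μ r := by
      rw [Metric.mem_closedBall, dist_eq_norm]
      have h1 : μ - (r / ‖wqh‖) • wqh - μ = -((r / ‖wqh‖) • wqh) := by abel
      rw [h1, norm_neg, norm_smul, Real.norm_eq_abs,
        abs_of_nonneg (by positivity : (0:ℝ) ≤ r / ‖wqh‖),
        div_mul_cancel₀ _ hwqhpos.ne']
    have hx0inner : inner (𝕜 := ℝ) wqh (μ - (r / ‖wqh‖) • wqh) = 1 := by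
      rw [inner_sub_right, real_inner_smul_right, real_inner_self_eq_norm_sq]
      have h2 : r / ‖wqh‖ * ‖wqh‖ ^ 2 = r * ‖wqh‖ := by
        field_simp
      rw [h2]
      exact hkey1
    have hx0dist : Metric.infDist (μ - (r / ‖wqh‖) • wqh)
        {x' : EuclideanSpace ℝ (Fin d) | inner (𝕜 := ℝ) wqh x' = (0 : ℝ)}
        = 1 / ‖wqh‖ := by
      rw [infDist_hyperplane' wqh _ hwqhne, hx0inner, abs_one]
    have hiInf : (⨅ x : (Metric.closedBall μ r ∪ Metric.closedBall (-μ) r :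
        Set (EuclideanSpace ℝ (Fin d))),
      Metric.infDist (x : EuclideanSpace ℝ (Fin d))
        {x' : EuclideanSpace ℝ (Fin d) | inner (𝕜 := ℝ) wqh x' = (0 : ℝ)})
        = 1 / ‖wqh‖ := by
      have hmem' : μ - (r / ‖wqh‖) • wqh ∈ (Metric.closedBall μ r ∪
          Metric.closedBall (-μ) r : Set (EuclideanSpace ℝ (Fin d))) :=
        Set.mem_union_left _ hx0mem
      haveI hne : Nonempty (Metric.closedBall μ r ∪ Metric.closedBall (-μ) r :
          Set (EuclideanSpace ℝ (Fin d))) := ⟨⟨_, hmem'⟩⟩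
      apply le_antisymm
      · have hb1 : BddBelow (Set.range fun x : (Metric.closedBall μ r ∪
            Metric.closedBall (-μ) r : Set (EuclideanSpace ℝ (Fin d))) =>
            Metric.infDist (x : EuclideanSpace ℝ (Fin d))
              {x' : EuclideanSpace ℝ (Fin d) | inner (𝕜 := ℝ) wqh x' = (0 : ℝ)}) := by
          refine ⟨0, ?_⟩
          rintro y ⟨x, rfl⟩
          exact Metric.infDist_nonneg
        have := ciInf_le hb1 (⟨_, hmem'⟩ : (Metric.closedBall μ r ∪
            Metric.closedBall (-μ) r : Set (EuclideanSpace ℝ (Fin d))))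
        rw [hx0dist] at this
        exact this
      · exact le_ciInf fun x => hlow x x.2
    rw [hiInf, hsq1, hwn]
    field_simp
end

section
/- Let C ≥ 2 and d ≥ C. For w_1,…,w_C ∈ ℝ^d and b ∈ ℝ^C define Z_c = ‖w_c − (1/(C−1)) Σ_{c'≠c} w_{c'}‖ + b_c − (1/(C−1)) Σ_{c'≠c} b_{c'}. Then (w, b) minimizes Σ_{c∈[C]} ‖w_c‖² + ‖b‖² subject to min_{c∈[C]} Z_c ≥ 1 if and only if ‖w_c‖ = (C−1)/C for all c, Σ_{c∈[C]} w_c = 0, and b = 0. Furthermore, at every such minimizer, Z_c = 1 for all c ∈ [C]. -/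
/-- `Z_c`: the distance-plus-bias quantity evaluated at the barycenter of the
simplex spanned by the other class vectors. -/
noncomputable def ncZ {d C : ℕ} (w : Fin C → EuclideanSpace ℝ (Fin d))
    (b : Fin C → ℝ) (c : Fin C) : ℝ :=
  ‖w c - ((C : ℝ) - 1)⁻¹ • ∑ c' ∈ Finset.univ.erase c, w c'‖ +
    (b c - ((C : ℝ) - 1)⁻¹ * ∑ c' ∈ Finset.univ.erase c, b c')

open Finset RealInnerProductSpace

private lemma ncZ_key {d C : ℕ} (hC : 2 ≤ C) (w : Fin C → EuclideanSpace ℝ (Fin d))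
    (b : Fin C → ℝ) (c : Fin C) :
    ncZ w b c
    = ((C : ℝ) - 1)⁻¹ *
      (‖(C : ℝ) • w c - ∑ c', w c'‖ + ((C : ℝ) * b c - ∑ c', b c')) := by
  have hC1 : (0:ℝ) < (C : ℝ) - 1 := by
    have : (2:ℝ) ≤ (C:ℝ) := by exact_mod_cast hC
    linarith
  unfold ncZ
  rw [Finset.sum_erase_eq_sub (Finset.mem_univ c), Finset.sum_erase_eq_sub (Finset.mem_univ c)]
  have h1 : w c - ((C : ℝ) - 1)⁻¹ • ((∑ c', w c') - w c)
      = ((C : ℝ) - 1)⁻¹ • ((C : ℝ) • w c - ∑ c', w c') := by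
    match_scalars <;> field_simp <;> ring
  rw [h1, norm_smul, Real.norm_eq_abs, abs_of_pos (inv_pos.mpr hC1)]
  field_simp
  ring

private lemma feas_iff' {d C : ℕ} (hC : 2 ≤ C) (w : Fin C → EuclideanSpace ℝ (Fin d))
    (b : Fin C → ℝ) (c : Fin C) (h : 1 ≤ ncZ w b c) :
    (C : ℝ) - 1 ≤ ‖(C : ℝ) • w c - ∑ c', w c'‖ + ((C : ℝ) * b c - ∑ c', b c') := by
  have hC1 : (0:ℝ) < (C : ℝ) - 1 := by
    have : (2:ℝ) ≤ (C:ℝ) := by exact_mod_cast hC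
    linarith
  rw [ncZ_key hC] at h
  calc (C:ℝ) - 1 = ((C:ℝ)-1) * 1 := (mul_one _).symm
    _ ≤ ((C:ℝ)-1) * (((C:ℝ)-1)⁻¹ *
        (‖(C : ℝ) • w c - ∑ c', w c'‖ + ((C : ℝ) * b c - ∑ c', b c'))) := by
        exact mul_le_mul_of_nonneg_left h hC1.le
    _ = _ := by field_simp

private lemma core_lb {d C : ℕ} (hC : 2 ≤ C) (w : Fin C → EuclideanSpace ℝ (Fin d))
    (b : Fin C → ℝ) (h : ∀ c, 1 ≤ ncZ w b c) :
    ((C : ℝ) - 1) ^ 2 + ‖∑ c, w c‖ ^ 2 ≤ (C : ℝ) * ∑ c, ‖w c‖ ^ 2 := by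
  have hC2 : (2:ℝ) ≤ (C:ℝ) := by exact_mod_cast hC
  have h' := fun c => feas_iff' hC w b c (h c)
  set S := ∑ c, w c with hS
  set Sb := ∑ c, b c with hSb
  set t : Fin C → ℝ := fun c => ‖(C : ℝ) • w c - S‖ with ht
  have h3 : (C:ℝ) * ((C:ℝ) - 1) ≤ ∑ c, t c := by
    have hle := Finset.sum_le_sum (fun c (_ : c ∈ Finset.univ) => by
      have := h' c; linarith : ∀ c ∈ Finset.univ, ((C:ℝ)-1) - ((C:ℝ)*b c - Sb) ≤ t c)
    have hsum : ∑ c : Fin C, (((C:ℝ)-1) - ((C:ℝ)*b c - Sb)) = (C:ℝ)*((C:ℝ)-1) := by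
      rw [Finset.sum_sub_distrib, Finset.sum_sub_distrib, Finset.sum_sub_distrib,
        ← Finset.mul_sum, ← hSb]
      simp [Finset.sum_const, Finset.card_univ]
      ring
    rw [hsum] at hle
    exact hle
  have h4 : (∑ c, t c) ^ 2 ≤ (C:ℝ) * ∑ c, t c ^ 2 := by
    have := sq_sum_le_card_mul_sum_sq (s := (Finset.univ : Finset (Fin C))) (f := t)
    simpa [Finset.card_univ] using this
  have h5 : ∑ c, t c ^ 2 = (C:ℝ)^2 * (∑ c, ‖w c‖^2) - (C:ℝ) * ‖S‖^2 := by
    have hterm : ∀ c : Fin C, t c ^ 2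
        = (C:ℝ)^2 * ‖w c‖^2 - 2 * (C:ℝ) * ⟪w c, S⟫ + ‖S‖^2 := by
      intro c
      rw [ht]
      rw [norm_sub_sq_real, norm_smul, real_inner_smul_left]
      simp [mul_pow]
      ring
    rw [Finset.sum_congr rfl (fun c _ => hterm c)]
    have hin : ∑ c, ⟪w c, S⟫ = ‖S‖^2 := by
      rw [← sum_inner, ← hS, real_inner_self_eq_norm_sq]
    rw [Finset.sum_add_distrib, Finset.sum_sub_distrib, ← Finset.mul_sum, ← Finset.mul_sum, hin]
    simp [Finset.sum_const, Finset.card_univ]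
    ring
  have h7 : ((C:ℝ) * ((C:ℝ)-1))^2 ≤ (∑ c, t c)^2 := pow_le_pow_left₀ (by nlinarith) h3 2
  nlinarith [h4, h5, h7, sq_nonneg ((C:ℝ))]

private lemma Z_of_props' {d C : ℕ} (hC : 2 ≤ C) (w : Fin C → EuclideanSpace ℝ (Fin d))
    (hw : ∀ c, ‖w c‖ = ((C : ℝ) - 1) / C) (hs : (∑ c, w c) = 0) (c : Fin C) :
    ncZ w 0 c = 1 := by
  have hC1 : (0:ℝ) < (C : ℝ) - 1 := by
    have : (2:ℝ) ≤ (C:ℝ) := by exact_mod_cast hC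
    linarith
  have hCpos : (0:ℝ) < (C:ℝ) := by linarith
  rw [ncZ_key hC, hs, sub_zero, norm_smul, hw c]
  simp only [Pi.zero_apply, Finset.sum_const, smul_zero, mul_zero, zero_sub, neg_zero,
    add_zero, Real.norm_natCast, smul_eq_mul]
  field_simp

private lemma obj_of_props' {d C : ℕ} (hC : 2 ≤ C) (w : Fin C → EuclideanSpace ℝ (Fin d))
    (hw : ∀ c, ‖w c‖ = ((C : ℝ) - 1) / C) :
    (∑ c, ‖w c‖ ^ 2) + ∑ c : Fin C, ((0 : Fin C → ℝ) c) ^ 2 = ((C:ℝ)-1)^2 / C := by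
  have hCpos : (0:ℝ) < (C:ℝ) := by
    have : (2:ℝ) ≤ (C:ℝ) := by exact_mod_cast hC
    linarith
  have : ∀ c : Fin C, ‖w c‖ ^ 2 = (((C:ℝ)-1)/C)^2 := fun c => by rw [hw c]
  rw [Finset.sum_congr rfl (fun c _ => this c)]
  simp [Finset.sum_const, Finset.card_univ]
  field_simp

private lemma exists_props' {d C : ℕ} (hC : 2 ≤ C) (hdC : C ≤ d) :
    ∃ w₀ : Fin C → EuclideanSpace ℝ (Fin d),
      (∀ c, ‖w₀ c‖ = ((C : ℝ) - 1) / C) ∧ (∑ c, w₀ c) = 0 := by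
  have hC2 : (2:ℝ) ≤ (C:ℝ) := by exact_mod_cast hC
  have hCpos : (0:ℝ) < (C:ℝ) := by linarith
  set r : ℝ := Real.sqrt (((C:ℝ) - 1) / C) with hr
  have hrsq : r ^ 2 = ((C:ℝ) - 1) / C := Real.sq_sqrt (div_nonneg (by linarith) hCpos.le)
  have hrpos : 0 ≤ r := Real.sqrt_nonneg _
  set u : Fin C → EuclideanSpace ℝ (Fin d) :=
    fun c => EuclideanSpace.single (Fin.castLE hdC c) (1:ℝ) with hu
  set T : EuclideanSpace ℝ (Fin d) := ∑ c, u c with hT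
  have hinner : ∀ c c' : Fin C, ⟪u c, u c'⟫ = if c = c' then 1 else 0 := by
    intro c c'
    rw [hu]
    simp only
    rw [EuclideanSpace.inner_single_left]
    simp [EuclideanSpace.single_apply, Fin.castLE_inj, eq_comm]
  have hinnerT : ∀ c, ⟪u c, T⟫ = 1 := by
    intro c
    rw [hT, inner_sum]
    simp [hinner]
  have hTT : ⟪T, T⟫ = (C:ℝ) := by
    rw [hT, sum_inner, ← hT]
    simp [hinnerT, Finset.card_univ]
  refine ⟨fun c => r • u c - (r / C) • T, fun c => ?_, ?_⟩
  · have huu : ⟪u c, u c⟫ = (1:ℝ) := by rw [hinner]; simp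
    have hTu : ⟪T, u c⟫ = (1:ℝ) := by rw [real_inner_comm]; exact hinnerT c
    have hCne : (C:ℝ) ≠ 0 := ne_of_gt hCpos
    have hrr : r * r = ((C:ℝ)-1)/C := by rw [← sq]; exact hrsq
    have hsq : ‖r • u c - (r / C) • T‖ ^ 2 = (((C:ℝ) - 1) / C) ^ 2 := by
      rw [← real_inner_self_eq_norm_sq, inner_sub_sub_self]
      simp only [real_inner_smul_left, real_inner_smul_right, hinnerT, hTT, hTu, huu]
      have expand : r * (r * 1) - r * (r / (C:ℝ) * 1) - r / (C:ℝ) * (r * 1)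
          + r / (C:ℝ) * (r / (C:ℝ) * (C:ℝ)) = (r * r) * (((C:ℝ) - 1) / (C:ℝ)) := by
        field_simp
        ring
      linear_combination expand + (((C:ℝ) - 1) / (C:ℝ)) * hrr
    rw [← Real.sqrt_sq (norm_nonneg _), hsq,
      Real.sqrt_sq (div_nonneg (by linarith) hCpos.le)]
  · have h1 : ∑ c, (r • u c - (r / C) • T) = r • T - (C:ℝ) • ((r / C) • T) := by
      rw [Finset.sum_sub_distrib, ← Finset.smul_sum, ← hT, Finset.sum_const, Finset.card_univ]
      simp [Nat.cast_smul_eq_nsmul]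
    rw [h1, smul_smul, ← sub_smul]
    have h2 : r - (C:ℝ) * (r / C) = 0 := by field_simp; ring
    rw [h2, zero_smul]

/-- Lemma H.2: `(w,b)` minimizes `Σ_c ‖w_c‖² + ‖b‖²` subject to `min_c Z_c ≥ 1`
iff `‖w_c‖ = (C−1)/C` for all `c`, `Σ_c w_c = 0` and `b = 0`; moreover every
minimizer satisfies `Z_c = 1` for all `c`. -/
theorem stmt_13 {d C : ℕ} (hC : 2 ≤ C) (hdC : C ≤ d)
    (w : Fin C → EuclideanSpace ℝ (Fin d)) (b : Fin C → ℝ) :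
    (((∀ c, 1 ≤ ncZ w b c) ∧
      ∀ (w' : Fin C → EuclideanSpace ℝ (Fin d)) (b' : Fin C → ℝ),
        (∀ c, 1 ≤ ncZ w' b' c) →
        (∑ c, ‖w c‖ ^ 2) + ∑ c, b c ^ 2 ≤ (∑ c, ‖w' c‖ ^ 2) + ∑ c, b' c ^ 2) ↔
      ((∀ c, ‖w c‖ = ((C : ℝ) - 1) / C) ∧ (∑ c, w c) = 0 ∧ b = 0)) ∧
    (((∀ c, 1 ≤ ncZ w b c) ∧
      ∀ (w' : Fin C → EuclideanSpace ℝ (Fin d)) (b' : Fin C → ℝ),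
        (∀ c, 1 ≤ ncZ w' b' c) →
        (∑ c, ‖w c‖ ^ 2) + ∑ c, b c ^ 2 ≤ (∑ c, ‖w' c‖ ^ 2) + ∑ c, b' c ^ 2) →
      ∀ c, ncZ w b c = 1) := by
  have hC2 : (2:ℝ) ≤ (C:ℝ) := by exact_mod_cast hC
  have hCpos : (0:ℝ) < (C:ℝ) := by linarith
  have hC1 : (0:ℝ) < (C:ℝ) - 1 := by linarith
  obtain ⟨w₀, hw₀, hs₀⟩ := exists_props' hC hdC
  -- lower bound for all feasible points
  have hmin_val : ∀ (w' : Fin C → EuclideanSpace ℝ (Fin d)) (b' : Fin C → ℝ),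
      (∀ c, 1 ≤ ncZ w' b' c) →
      ((C:ℝ)-1)^2 / C ≤ (∑ c, ‖w' c‖ ^ 2) + ∑ c, b' c ^ 2 := by
    intro w' b' h
    have h1 := core_lb hC w' b' h
    have hb' : 0 ≤ ∑ c, b' c ^ 2 := Finset.sum_nonneg fun c _ => sq_nonneg _
    have hS' : 0 ≤ ‖∑ c, w' c‖ ^ 2 := sq_nonneg _
    rw [div_le_iff₀ hCpos]
    nlinarith [h1, hb', hS', hCpos]
  have hiff : ((∀ c, 1 ≤ ncZ w b c) ∧
      ∀ (w' : Fin C → EuclideanSpace ℝ (Fin d)) (b' : Fin C → ℝ),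
        (∀ c, 1 ≤ ncZ w' b' c) →
        (∑ c, ‖w c‖ ^ 2) + ∑ c, b c ^ 2 ≤ (∑ c, ‖w' c‖ ^ 2) + ∑ c, b' c ^ 2) ↔
      ((∀ c, ‖w c‖ = ((C : ℝ) - 1) / C) ∧ (∑ c, w c) = 0 ∧ b = 0) := by
    constructor
    · rintro ⟨hfeas, hmin⟩
      -- the objective value is at most the value at the explicit minimizer
      have hub : (∑ c, ‖w c‖ ^ 2) + ∑ c, b c ^ 2 ≤ ((C:ℝ)-1)^2 / C := by
        have h0 := hmin w₀ 0 (fun c => (Z_of_props' hC w₀ hw₀ hs₀ c).ge)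
        have h1 := obj_of_props' hC w₀ hw₀
        linarith
      have h1 := core_lb hC w b hfeas
      have hbnn : 0 ≤ ∑ c, b c ^ 2 := Finset.sum_nonneg fun c _ => sq_nonneg _
      have hSnn : 0 ≤ ‖∑ c, w c‖ ^ 2 := sq_nonneg _
      have hub2 : (C:ℝ) * ((∑ c, ‖w c‖ ^ 2) + ∑ c, b c ^ 2) ≤ ((C:ℝ)-1)^2 := by
        calc (C:ℝ) * ((∑ c, ‖w c‖ ^ 2) + ∑ c, b c ^ 2)
            ≤ (C:ℝ) * (((C:ℝ)-1)^2 / C) := by nlinarith [hub, hCpos]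
          _ = ((C:ℝ)-1)^2 := by field_simp
      have hSsq : ‖∑ c, w c‖ ^ 2 ≤ 0 := by nlinarith [h1, hub2, hbnn, hCpos]
      have hbsq : ∑ c, b c ^ 2 ≤ 0 := by nlinarith [h1, hub2, hSnn, hCpos]
      have hSzero : (∑ c, w c) = 0 := by
        have : ‖∑ c, w c‖ ^ 2 = 0 := le_antisymm hSsq hSnn
        have := (pow_eq_zero_iff two_ne_zero).mp this
        exact norm_eq_zero.mp this
      have hbzero : b = 0 := by
        have h0 : ∑ c, b c ^ 2 = 0 := le_antisymm hbsq hbnn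
        funext c
        have := (Finset.sum_eq_zero_iff_of_nonneg
          (fun c _ => sq_nonneg (b c))).mp h0 c (Finset.mem_univ c)
        exact (pow_eq_zero_iff two_ne_zero).mp this
      -- now the norms
      have hge : ∀ c, ((C:ℝ)-1)/C ≤ ‖w c‖ := by
        intro c
        have h2 := feas_iff' hC w b c (hfeas c)
        rw [hSzero, hbzero, sub_zero, norm_smul] at h2
        simp only [Pi.zero_apply, Finset.sum_const, smul_zero, mul_zero, zero_sub, neg_zero,
          add_zero, Real.norm_natCast, smul_eq_mul] at h2
        rw [div_le_iff₀ hCpos]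
        linarith
      have hsum_le : ∑ c, ‖w c‖ ^ 2 ≤ (C:ℝ) * (((C:ℝ)-1)/C)^2 := by
        have hb0 : ∑ c, b c ^ 2 = 0 := le_antisymm hbsq hbnn
        have : (C:ℝ) * (((C:ℝ)-1)/C)^2 = ((C:ℝ)-1)^2 / C := by field_simp
        rw [this]
        linarith
      have hnn : ∀ c ∈ (Finset.univ : Finset (Fin C)),
          0 ≤ ‖w c‖ ^ 2 - (((C:ℝ)-1)/C)^2 := by
        intro c _
        have hq : (0:ℝ) ≤ ((C:ℝ)-1)/C := div_nonneg (by linarith) hCpos.le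
        have := pow_le_pow_left₀ hq (hge c) 2
        linarith
      have hsum0 : ∑ c, (‖w c‖ ^ 2 - (((C:ℝ)-1)/C)^2) = 0 := by
        apply le_antisymm
        · rw [Finset.sum_sub_distrib]
          simp only [Finset.sum_const, Finset.card_univ, Fintype.card_fin, nsmul_eq_mul]
          linarith [hsum_le]
        · exact Finset.sum_nonneg hnn
      have heach : ∀ c, ‖w c‖ = ((C:ℝ)-1)/C := by
        intro c
        have := (Finset.sum_eq_zero_iff_of_nonneg hnn).mp hsum0 c (Finset.mem_univ c)
        have hsq : ‖w c‖ ^ 2 = (((C:ℝ)-1)/C)^2 := by linarith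
        rw [← Real.sqrt_sq (norm_nonneg _), hsq,
          Real.sqrt_sq (div_nonneg (by linarith) hCpos.le)]
      exact ⟨heach, hSzero, hbzero⟩
    · rintro ⟨hw, hs, hb⟩
      subst hb
      refine ⟨fun c => (Z_of_props' hC w hw hs c).ge, fun w' b' h' => ?_⟩
      have h1 := hmin_val w' b' h'
      have h2 := obj_of_props' hC w hw
      linarith
  refine ⟨hiff, fun h c => ?_⟩
  obtain ⟨hw, hs, hb⟩ := hiff.mp h
  subst hb
  exact Z_of_props' hC w hw hs c
end

section
/- Let C ≥ 2 and d ≥ C. For w_1,…,w_C ∈ ℝ^d and b ∈ ℝ^C define L_c = min over probability vectors α (α_{c'} ≥ 0 for c' ≠ c, Σ_{c'≠c} α_{c'} = 1) of ‖w_c − Σ_{c'≠c} α_{c'} w_{c'}‖ + (b_c − Σ_{c'≠c} α_{c'} b_{c'}). Then (w, b) minimizes Σ_{c∈[C]} ‖w_c‖² + ‖b‖² subject to min_{c∈[C]} L_c ≥ 1 if and only if: the convex hull of {w_c}_{c∈[C]} forms a regular (C−1)-simplex (i.e. ‖w_{c_1} − w_{c_2}‖² = 2(C−1)/C for all distinct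 c_1, c_2), ‖w_c‖ = (C−1)/C for all c, Σ_{c∈[C]} w_c = 0, and b = 0. -/
open Finset

noncomputable def ncL {d C : ℕ} (w : Fin C → EuclideanSpace ℝ (Fin d))
    (b : Fin C → ℝ) (c : Fin C) : ℝ :=
  sInf {z : ℝ | ∃ α : Fin C → ℝ, (∀ c', 0 ≤ α c') ∧ α c = 0 ∧ (∑ c', α c') = 1 ∧
    z = ‖w c - ∑ c', α c' • w c'‖ + (b c - ∑ c', α c' * b c')}

/-- pointwise feasibility -/
def Feas {d C : ℕ} (w : Fin C → EuclideanSpace ℝ (Fin d)) (b : Fin C → ℝ) (c : Fin C) : Prop :=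
  ∀ α : Fin C → ℝ, (∀ c', 0 ≤ α c') → α c = 0 → (∑ c', α c') = 1 →
    1 ≤ ‖w c - ∑ c', α c' • w c'‖ + (b c - ∑ c', α c' * b c')

lemma ncL_set_nonempty {d C : ℕ} (hC : 2 ≤ C) (w : Fin C → EuclideanSpace ℝ (Fin d))
    (b : Fin C → ℝ) (c : Fin C) :
    {z : ℝ | ∃ α : Fin C → ℝ, (∀ c', 0 ≤ α c') ∧ α c = 0 ∧ (∑ c', α c') = 1 ∧
      z = ‖w c - ∑ c', α c' • w c'‖ + (b c - ∑ c', α c' * b c')}.Nonempty := by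
  have : Nontrivial (Fin C) := Fin.nontrivial_iff_two_le.mpr hC
  obtain ⟨c', hc'⟩ := exists_ne c
  refine ⟨_, fun x => if x = c' then 1 else 0, ?_, ?_, ?_, rfl⟩
  · intro x; by_cases h : x = c' <;> simp [h]
  · simp [hc'.symm]
  · simp

lemma ncL_ge_one_iff {d C : ℕ} (hC : 2 ≤ C) (w : Fin C → EuclideanSpace ℝ (Fin d))
    (b : Fin C → ℝ) (c : Fin C) : 1 ≤ ncL w b c ↔ Feas w b c := by
  constructor
  · intro h α h0 hc hs
    have hbdd : BddBelow {z : ℝ | ∃ α : Fin C → ℝ, (∀ c', 0 ≤ α c') ∧ α c = 0 ∧ (∑ c', α c') = 1 ∧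
        z = ‖w c - ∑ c', α c' • w c'‖ + (b c - ∑ c', α c' * b c')} := by
      by_contra hb
      rw [ncL, Real.sInf_of_not_bddBelow hb] at h
      norm_num at h
    exact le_trans h (csInf_le hbdd ⟨α, h0, hc, hs, rfl⟩)
  · intro h
    refine le_csInf (ncL_set_nonempty hC w b c) ?_
    rintro z ⟨α, h0, hc, hs, rfl⟩
    exact h α h0 hc hs


lemma gram_expand {d C : ℕ} (hC : 2 ≤ C) (w : Fin C → EuclideanSpace ℝ (Fin d))
    (hn : ∀ c, ‖w c‖ ^ 2 = (((C:ℝ)-1)/C)^2)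
    (hg : ∀ c₁ c₂, c₁ ≠ c₂ → (inner ℝ (w c₁) (w c₂) : ℝ) = -(((C:ℝ)-1)/C^2))
    (c : Fin C) (α : Fin C → ℝ) (hc : α c = 0) (hs : ∑ c', α c' = 1) :
    ‖w c - ∑ c', α c' • w c'‖^2 = ((C:ℝ)-1)/C * (1 + ∑ c', (α c')^2) := by
  set K : ℝ := (((C:ℝ)-1)/C)^2 + ((C:ℝ)-1)/C^2 with hK
  have hgram : ∀ c₁ c₂ : Fin C, (inner ℝ (w c₁) (w c₂) : ℝ)
      = -(((C:ℝ)-1)/C^2) + (if c₁ = c₂ then K else 0) := by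
    intro c₁ c₂
    by_cases h : c₁ = c₂
    · subst h
      rw [real_inner_self_eq_norm_sq, hn c₁, if_pos rfl, hK]; ring
    · rw [hg c₁ c₂ h, if_neg h]; ring
  have h1 : (inner ℝ (w c) (∑ c', α c' • w c') : ℝ) = -(((C:ℝ)-1)/C^2) := by
    rw [inner_sum]
    have : ∀ c' ∈ univ, (inner ℝ (w c) (α c' • w c') : ℝ) = α c' * (-(((C:ℝ)-1)/C^2)) := by
      intro c' _
      rw [real_inner_smul_right, hgram c c']
      by_cases h : c = c'
      · subst h; rw [hc]; ring
      · rw [if_neg h]; ring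
    rw [Finset.sum_congr rfl this, ← Finset.sum_mul, hs, one_mul]
  have h2 : ‖∑ c', α c' • w c'‖^2 = -(((C:ℝ)-1)/C^2) + K * ∑ c', (α c')^2 := by
    rw [← real_inner_self_eq_norm_sq, sum_inner]
    have : ∀ c₁ ∈ univ, (inner ℝ (α c₁ • w c₁) (∑ c', α c' • w c') : ℝ)
        = α c₁ * (-(((C:ℝ)-1)/C^2)) + K * (α c₁)^2 := by
      intro c₁ _
      rw [real_inner_smul_left, inner_sum]
      have : ∀ c₂ ∈ univ, (inner ℝ (w c₁) (α c₂ • w c₂) : ℝ)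
          = α c₂ * (-(((C:ℝ)-1)/C^2)) + (if c₂ = c₁ then K * α c₂ else 0) := by
        intro c₂ _
        rw [real_inner_smul_right, hgram c₁ c₂]
        by_cases h : c₂ = c₁
        · rw [if_pos h, if_pos h.symm]; ring
        · rw [if_neg h, if_neg (Ne.symm h)]; ring
      rw [Finset.sum_congr rfl this, Finset.sum_add_distrib, ← Finset.sum_mul, hs,
        Finset.sum_ite_eq' univ c₁ (fun c₂ => K * α c₂), if_pos (mem_univ c₁)]
      ring
    rw [Finset.sum_congr rfl this, Finset.sum_add_distrib, ← Finset.sum_mul, hs, ← Finset.mul_sum]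
    ring
  rw [norm_sub_sq_real, h1, h2, hn c]
  have hC0 : (C:ℝ) ≠ 0 := Nat.cast_ne_zero.mpr (by omega)
  rw [hK]
  field_simp
  ring


lemma sum_sq_lb {C : ℕ} (hC : 2 ≤ C) (c : Fin C) (α : Fin C → ℝ)
    (hc : α c = 0) (hs : ∑ c', α c' = 1) :
    ((C:ℝ)-1)⁻¹ ≤ ∑ c', (α c')^2 := by
  have hcard : ((univ.erase c).card : ℝ) = (C:ℝ) - 1 := by
    rw [card_erase_of_mem (mem_univ c)]
    simp only [card_univ, Fintype.card_fin]
    have : 1 ≤ C := by omega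
    push_cast [Nat.cast_sub this]
    ring
  have h1 : ∑ c' ∈ univ.erase c, α c' = 1 := by
    rw [Finset.sum_erase _ hc, hs]
  have h2 : ∑ c' ∈ univ.erase c, (α c')^2 ≤ ∑ c', (α c')^2 :=
    Finset.sum_le_sum_of_subset_of_nonneg (Finset.subset_univ _) (by intro i _ _; positivity)
  have hcs := Finset.sum_mul_sq_le_sq_mul_sq (univ.erase c) α (fun _ => 1)
  simp only [mul_one, one_pow, Finset.sum_const, nsmul_eq_mul] at hcs
  rw [h1] at hcs
  have hC1 : (0:ℝ) < (C:ℝ) - 1 := by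
    have : (2:ℝ) ≤ (C:ℝ) := by exact_mod_cast hC
    linarith
  rw [hcard] at hcs
  rw [inv_le_iff_one_le_mul₀ hC1]  -- maybe wrong name
  calc (1:ℝ) = 1^2 := by ring
    _ ≤ (∑ c' ∈ univ.erase c, (α c')^2) * ((C:ℝ)-1) := by linarith
    _ ≤ (∑ c', (α c')^2) * ((C:ℝ)-1) := by nlinarith
  


lemma uniform_constraint {d C : ℕ} (hC : 2 ≤ C) (w : Fin C → EuclideanSpace ℝ (Fin d))
    (b : Fin C → ℝ) (c : Fin C) (hf : Feas w b c) :
    ((C:ℝ)-1) - ((C:ℝ) * b c - ∑ c', b c') ≤ ‖(C:ℝ) • w c - ∑ c', w c'‖ := by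
  have hC1 : (0:ℝ) < (C:ℝ) - 1 := by
    have : (2:ℝ) ≤ (C:ℝ) := by exact_mod_cast hC
    linarith
  have hCne : ((C:ℝ)-1) ≠ 0 := ne_of_gt hC1
  set k : ℝ := ((C:ℝ)-1)⁻¹ with hk
  have hk0 : 0 < k := inv_pos.mpr hC1
  set α : Fin C → ℝ := fun c' => if c' = c then 0 else k with hα
  have h0 : ∀ c', 0 ≤ α c' := by
    intro c'; by_cases h : c' = c <;> simp [hα, h, le_of_lt hk0]
  have hcc : α c = 0 := by simp [hα]
  have hs : ∑ c', α c' = 1 := by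
    have : ∀ x : Fin C, α x = k - (if x = c then k else 0) := by
      intro x; by_cases h : x = c <;> simp [hα, h]
    rw [Finset.sum_congr rfl (fun x _ => this x), Finset.sum_sub_distrib,
      Finset.sum_ite_eq' univ c (fun _ => k), if_pos (mem_univ c), Finset.sum_const,
      card_univ, Fintype.card_fin, nsmul_eq_mul, hk]
    field_simp
  have key := hf α h0 hcc hs
  have hsum1 : ∑ c', α c' • w c' = k • ((∑ c', w c') - w c) := by
    have : ∀ x : Fin C, α x • w x = k • w x - (if x = c then k • w x else 0) := by
      intro x; by_cases h : x = c <;> simp [hα, h]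
    rw [Finset.sum_congr rfl (fun x _ => this x), Finset.sum_sub_distrib,
      Finset.sum_ite_eq' univ c (fun x => k • w x), if_pos (mem_univ c), ← Finset.smul_sum,
      ← smul_sub]
  have hsum2 : ∑ c', α c' * b c' = k * ((∑ c', b c') - b c) := by
    have : ∀ x : Fin C, α x * b x = k * b x - (if x = c then k * b x else 0) := by
      intro x; by_cases h : x = c <;> simp [hα, h]
    rw [Finset.sum_congr rfl (fun x _ => this x), Finset.sum_sub_distrib,
      Finset.sum_ite_eq' univ c (fun x => k * b x), if_pos (mem_univ c), ← Finset.mul_sum,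
      ← mul_sub]
  rw [hsum1, hsum2] at key
  have hinv : k * (C:ℝ) = 1 + k := by
    rw [hk]; field_simp; ring
  have hw : w c - k • ((∑ c', w c') - w c) = k • (((C:ℝ)) • w c - ∑ c', w c') := by
    rw [smul_sub, smul_sub, smul_smul, hinv, add_smul, one_smul]
    abel
  rw [hw, norm_smul, Real.norm_eq_abs, abs_of_pos hk0] at key
  have key2 := mul_le_mul_of_nonneg_left key (le_of_lt hC1)
  rw [mul_add, ← mul_assoc, mul_inv_cancel₀ hCne, one_mul, mul_one] at key2
  have hb : ((C:ℝ)-1) * (b c - k * ((∑ c', b c') - b c))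
      = (C:ℝ) * b c - ∑ c', b c' := by
    rw [hk]; field_simp; ring
  rw [hb] at key2
  linarith

lemma sum_norm_sq_identity {d C : ℕ} (w : Fin C → EuclideanSpace ℝ (Fin d)) :
    ∑ c, ‖(C:ℝ) • w c - ∑ c', w c'‖^2
      = (C:ℝ)^2 * ∑ c, ‖w c‖^2 - (C:ℝ) * ‖∑ c', w c'‖^2 := by
  have expand : ∀ c : Fin C, ‖(C:ℝ) • w c - ∑ c', w c'‖^2
      = (C:ℝ)^2 * ‖w c‖^2 - 2 * (C:ℝ) * (inner ℝ (w c) (∑ c', w c') : ℝ) + ‖∑ c', w c'‖^2 := by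
    intro c
    rw [norm_sub_sq_real, real_inner_smul_left, norm_smul, Real.norm_eq_abs, mul_pow, sq_abs]
    ring
  rw [Finset.sum_congr rfl (fun c _ => expand c), Finset.sum_add_distrib, Finset.sum_sub_distrib,
    ← Finset.mul_sum, ← Finset.mul_sum, ← sum_inner, real_inner_self_eq_norm_sq,
    Finset.sum_const, card_univ, Fintype.card_fin, nsmul_eq_mul]
  ring

lemma lower_bound {d C : ℕ} (hC : 2 ≤ C) (w : Fin C → EuclideanSpace ℝ (Fin d)) (b : Fin C → ℝ)
    (hf : ∀ c, Feas w b c) :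
    (((C:ℝ)-1)^2)/C + ‖∑ c, w c‖^2 / C ≤ ∑ c, ‖w c‖^2 := by
  have hC0 : (0:ℝ) < (C:ℝ) := by
    have : 0 < C := by omega
    exact_mod_cast this
  have hper : ∀ c : Fin C, ((C:ℝ)-1)^2 - 2*((C:ℝ)-1) * ((C:ℝ) * b c - ∑ c', b c')
      ≤ ‖(C:ℝ) • w c - ∑ c', w c'‖^2 := by
    intro c
    have h1 := uniform_constraint hC w b c (hf c)
    have h2 : (0:ℝ) ≤ ‖(C:ℝ) • w c - ∑ c', w c'‖ := norm_nonneg _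
    set N : ℝ := ‖(C:ℝ) • w c - ∑ c', w c'‖
    set t : ℝ := (C:ℝ) * b c - ∑ c', b c'
    have ha : (0:ℝ) < (C:ℝ) - 1 := by
      have : (2:ℝ) ≤ (C:ℝ) := by exact_mod_cast hC
      linarith
    rcases le_or_gt t ((C:ℝ)-1) with h | h
    · have h3 : (((C:ℝ)-1) - t)^2 ≤ N^2 := by nlinarith
      nlinarith [sq_nonneg t]
    · nlinarith [sq_nonneg N]
  have hsum := Finset.sum_le_sum (fun c (_ : c ∈ univ) => hper c)
  rw [sum_norm_sq_identity w, Finset.sum_sub_distrib] at hsum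
  have hbsum : ∑ c : Fin C, (2*((C:ℝ)-1) * ((C:ℝ) * b c - ∑ c', b c')) = 0 := by
    rw [← Finset.mul_sum, Finset.sum_sub_distrib, ← Finset.mul_sum, Finset.sum_const,
      card_univ, Fintype.card_fin, nsmul_eq_mul]
    ring
  rw [hbsum] at hsum
  rw [Finset.sum_const, card_univ, Fintype.card_fin, nsmul_eq_mul] at hsum
  rw [← add_div, div_le_iff₀ hC0]
  nlinarith [norm_nonneg (∑ c, w c), sq_nonneg ‖∑ c, w c‖]


lemma inner_of_dist {d C : ℕ} (hC : 2 ≤ C) (w : Fin C → EuclideanSpace ℝ (Fin d))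
    (hn : ∀ c, ‖w c‖ = ((C:ℝ)-1)/C)
    (hd : ∀ c₁ c₂ : Fin C, c₁ ≠ c₂ → ‖w c₁ - w c₂‖ ^ 2 = 2 * ((C : ℝ) - 1) / C)
    {c₁ c₂ : Fin C} (h : c₁ ≠ c₂) :
    (inner ℝ (w c₁) (w c₂) : ℝ) = -(((C:ℝ)-1)/C^2) := by
  have e := norm_sub_sq_real (w c₁) (w c₂)
  rw [hd c₁ c₂ h, hn c₁, hn c₂] at e
  have hC0 : (C:ℝ) ≠ 0 := Nat.cast_ne_zero.mpr (by omega)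
  have key : ((((C:ℝ)-1)/C)^2 - ((C:ℝ)-1)/C) = -(((C:ℝ)-1)/C^2) := by
    field_simp; ring
  have e2 : 2 * ((C:ℝ) - 1) / C = 2 * (((C:ℝ)-1)/C) := by ring
  linarith [e, key, e2.symm ▸ e]

lemma feas_of_gram {d C : ℕ} (hC : 2 ≤ C) (w : Fin C → EuclideanSpace ℝ (Fin d))
    (hn : ∀ c, ‖w c‖ ^ 2 = (((C:ℝ)-1)/C)^2)
    (hg : ∀ c₁ c₂, c₁ ≠ c₂ → (inner ℝ (w c₁) (w c₂) : ℝ) = -(((C:ℝ)-1)/C^2))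
    (c : Fin C) : Feas w 0 c := by
  intro α h0 hc hs
  have hval := gram_expand hC w hn hg c α hc hs
  have hA := sum_sq_lb hC c α hc hs
  have hC1 : (0:ℝ) < (C:ℝ) - 1 := by
    have : (2:ℝ) ≤ (C:ℝ) := by exact_mod_cast hC
    linarith
  have hC0 : (0:ℝ) < (C:ℝ) := by linarith
  have h1 : (1:ℝ) ≤ ‖w c - ∑ c', α c' • w c'‖^2 := by
    rw [hval]
    have e1 : ((C:ℝ)-1)/C * (1 + ((C:ℝ)-1)⁻¹) = 1 := by field_simp; ring
    have e2 : ((C:ℝ)-1)/C * (1 + ((C:ℝ)-1)⁻¹) ≤ ((C:ℝ)-1)/C * (1 + ∑ c', (α c')^2) :=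
      mul_le_mul_of_nonneg_left (by linarith) (by positivity)
    linarith
  have h2 : (0:ℝ) ≤ ‖w c - ∑ c', α c' • w c'‖ := norm_nonneg _
  simp only [Pi.zero_apply, mul_zero, Finset.sum_const_zero, sub_zero, add_zero]
  nlinarith


section ETF
variable {d C : ℕ} (hdC : C ≤ d)

noncomputable def etfE (hdC : C ≤ d) : Fin C → EuclideanSpace ℝ (Fin d) :=
  fun c => EuclideanSpace.single (⟨c, lt_of_lt_of_le c.isLt hdC⟩ : Fin d) (1:ℝ)

lemma etfE_inner (c₁ c₂ : Fin C) :
    (inner ℝ (etfE hdC c₁) (etfE hdC c₂) : ℝ) = if c₁ = c₂ then 1 else 0 := by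
  rw [etfE, etfE, EuclideanSpace.inner_single_left]
  simp only [map_one, one_mul, EuclideanSpace.single_apply]
  by_cases h : c₁ = c₂
  · subst h; simp
  · rw [if_neg, if_neg h]
    intro he
    exact h (Fin.ext (by simpa using congrArg Fin.val he))

noncomputable def etfU (hdC : C ≤ d) : Fin C → EuclideanSpace ℝ (Fin d) :=
  fun c => etfE hdC c - (C:ℝ)⁻¹ • ∑ c', etfE hdC c'

lemma etfU_inner (hC : 2 ≤ C) (c₁ c₂ : Fin C) :
    (inner ℝ (etfU hdC c₁) (etfU hdC c₂) : ℝ)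
      = (if c₁ = c₂ then 1 else 0) - (C:ℝ)⁻¹ := by
  have hC0 : ((C:ℝ)) ≠ 0 := Nat.cast_ne_zero.mpr (by omega)
  have hEJ : ∀ c : Fin C, (inner ℝ (etfE hdC c) (∑ c', etfE hdC c') : ℝ) = 1 := by
    intro c
    rw [inner_sum]
    rw [Finset.sum_congr rfl (fun c' _ => etfE_inner hdC c c')]
    rw [Finset.sum_ite_eq univ c (fun _ => (1:ℝ))]
    simp
  have hJE : ∀ c : Fin C, (inner ℝ (∑ c', etfE hdC c') (etfE hdC c) : ℝ) = 1 := by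
    intro c; rw [real_inner_comm]; exact hEJ c
  have hJJ : (inner ℝ (∑ c', etfE (C := C) hdC c') (∑ c', etfE hdC c') : ℝ) = C := by
    rw [inner_sum]
    rw [Finset.sum_congr rfl (fun c' _ => hJE c')]
    simp
  rw [etfU, etfU, inner_sub_left, inner_sub_right, inner_sub_right,
    real_inner_smul_left, real_inner_smul_right, real_inner_smul_right,
    real_inner_smul_left, hEJ, hJE, hJJ, etfE_inner hdC c₁ c₂]
  field_simp
  ring

end ETF

section ETF2
variable {d C : ℕ}

noncomputable def etf (hdC : C ≤ d) : Fin C → EuclideanSpace ℝ (Fin d) :=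
  fun c => Real.sqrt (((C:ℝ)-1)/C) • etfU hdC c

lemma etf_inner (hdC : C ≤ d) (hC : 2 ≤ C) (c₁ c₂ : Fin C) :
    (inner ℝ (etf hdC c₁) (etf hdC c₂) : ℝ)
      = ((C:ℝ)-1)/C * ((if c₁ = c₂ then 1 else 0) - (C:ℝ)⁻¹) := by
  have hnn : (0:ℝ) ≤ ((C:ℝ)-1)/C := by
    have h2 : (2:ℝ) ≤ (C:ℝ) := by exact_mod_cast hC
    have : (0:ℝ) < (C:ℝ) := by linarith
    apply div_nonneg <;> linarith
  rw [etf, etf, real_inner_smul_left, real_inner_smul_right, ← mul_assoc,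
    Real.mul_self_sqrt hnn, etfU_inner hdC hC c₁ c₂]

lemma etf_norm_sq (hdC : C ≤ d) (hC : 2 ≤ C) (c : Fin C) :
    ‖etf hdC c‖^2 = (((C:ℝ)-1)/C)^2 := by
  have hC0 : ((C:ℝ)) ≠ 0 := Nat.cast_ne_zero.mpr (by omega)
  rw [← real_inner_self_eq_norm_sq, etf_inner hdC hC c c, if_pos rfl]
  field_simp

lemma etf_inner_ne (hdC : C ≤ d) (hC : 2 ≤ C) {c₁ c₂ : Fin C} (h : c₁ ≠ c₂) :
    (inner ℝ (etf hdC c₁) (etf hdC c₂) : ℝ) = -(((C:ℝ)-1)/C^2) := by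
  rw [etf_inner hdC hC c₁ c₂, if_neg h]
  have hC0 : ((C:ℝ)) ≠ 0 := Nat.cast_ne_zero.mpr (by omega)
  field_simp
  ring

end ETF2


lemma key_quad (k : ℝ) (hk : 0 < k) (a B : ℝ) (hB : 0 ≤ B)
    (h : ∀ ε : ℝ, |ε| ≤ k → 0 ≤ 2*ε*a + ε^2*B) : a = 0 := by
  by_contra ha
  have habs : 0 < |a| := abs_pos.mpr ha
  set m := min k (|a|/(B+1)) with hm
  have hB1 : (0:ℝ) < B + 1 := by linarith
  have hm0 : 0 < m := lt_min hk (by positivity)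
  have hmk : m ≤ k := min_le_left _ _
  have hma : m * (B+1) ≤ |a| := by
    have := min_le_right k (|a|/(B+1))
    calc m * (B+1) ≤ (|a|/(B+1)) * (B+1) := by
          apply mul_le_mul_of_nonneg_right this (le_of_lt hB1)
      _ = |a| := by field_simp
  rcases lt_or_gt_of_ne ha with hneg | hpos
  · have h1 := h m (by rwa [abs_of_pos hm0])
    have : |a| = -a := abs_of_neg hneg
    nlinarith
  · have h1 := h (-m) (by rwa [abs_neg, abs_of_pos hm0])
    have : |a| = a := abs_of_pos hpos
    nlinarith

lemma inner_eq_of_min {d C : ℕ} (hC : 2 ≤ C) (w : Fin C → EuclideanSpace ℝ (Fin d))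
    (hfeas : ∀ c, Feas w 0 c)
    (hn : ∀ c, ‖w c‖ = ((C:ℝ)-1)/C) (hS : (∑ c, w c) = 0)
    {c c₁ c₂ : Fin C} (h1 : c₁ ≠ c) (h2 : c₂ ≠ c) (h12 : c₁ ≠ c₂) :
    (inner ℝ (w c) (w c₁) : ℝ) = (inner ℝ (w c) (w c₂) : ℝ) := by
  have hC1 : (0:ℝ) < (C:ℝ) - 1 := by
    have : (2:ℝ) ≤ (C:ℝ) := by exact_mod_cast hC
    linarith
  have hC0 : (0:ℝ) < (C:ℝ) := by linarith
  set k : ℝ := ((C:ℝ)-1)⁻¹ with hk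
  have hk0 : 0 < k := inv_pos.mpr hC1
  set v : EuclideanSpace ℝ (Fin d) := w c₂ - w c₁ with hv
  -- the quadratic inequality
  have main : ∀ ε : ℝ, |ε| ≤ k → 0 ≤ 2*ε*((1+k) * (inner ℝ (w c) v : ℝ)) + ε^2*‖v‖^2 := by
    intro ε hε
    set α : Fin C → ℝ := fun x =>
      (if x = c then 0 else k) + (if x = c₁ then ε else 0) - (if x = c₂ then ε else 0) with hα
    have hαc : α c = 0 := by
      simp [hα, if_neg h1, if_neg h2, (Ne.symm h1 : ¬ c = c₁), (Ne.symm h2 : ¬ c = c₂)]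
    have hα0 : ∀ x, 0 ≤ α x := by
      intro x
      have hεk : -k ≤ ε ∧ ε ≤ k := abs_le.mp hε
      by_cases hxc : x = c
      · rw [hxc, hαc]
      · by_cases hx1 : x = c₁
        · have : ¬ x = c₂ := by rw [hx1]; exact h12
          simp only [hα, if_neg hxc, if_pos hx1, if_neg this]
          linarith [hεk.1]
        · by_cases hx2 : x = c₂
          · simp only [hα, if_neg hxc, if_neg hx1, if_pos hx2]
            linarith [hεk.2]
          · simp only [hα, if_neg hxc, if_neg hx1, if_neg hx2]
            linarith [hk0]
    have hcard : ∑ x : Fin C, (if x = c then (0:ℝ) else k) = 1 := by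
      have : ∀ x : Fin C, (if x = c then (0:ℝ) else k) = k - (if x = c then k else 0) := by
        intro x; by_cases h : x = c <;> simp [h]
      rw [Finset.sum_congr rfl (fun x _ => this x), Finset.sum_sub_distrib,
        Finset.sum_ite_eq' univ c (fun _ => k), if_pos (mem_univ c), Finset.sum_const,
        card_univ, Fintype.card_fin, nsmul_eq_mul, hk]
      field_simp
    have hαs : ∑ x, α x = 1 := by
      simp only [hα]
      rw [Finset.sum_sub_distrib, Finset.sum_add_distrib, hcard,
        Finset.sum_ite_eq' univ c₁ (fun _ => ε), Finset.sum_ite_eq' univ c₂ (fun _ => ε),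
        if_pos (mem_univ c₁), if_pos (mem_univ c₂)]
      ring
    have key := hfeas c α hα0 hαc hαs
    simp only [Pi.zero_apply, mul_zero, Finset.sum_const_zero, sub_zero, add_zero] at key
    -- compute the sum
    have hsum : ∑ x, α x • w x = -(k • w c) + ε • (w c₁ - w c₂) := by
      simp only [hα, add_smul, sub_smul]
      rw [Finset.sum_sub_distrib, Finset.sum_add_distrib]
      have e1 : ∑ x : Fin C, (if x = c then (0:ℝ) else k) • w x = k • ((∑ x, w x) - w c) := by
        have : ∀ x : Fin C, (if x = c then (0:ℝ) else k) • w x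
            = k • w x - (if x = c then k • w x else 0) := by
          intro x; by_cases h : x = c <;> simp [h]
        rw [Finset.sum_congr rfl (fun x _ => this x), Finset.sum_sub_distrib,
          Finset.sum_ite_eq' univ c (fun x => k • w x), if_pos (mem_univ c),
          ← Finset.smul_sum, ← smul_sub]
      have e2 : ∑ x : Fin C, (if x = c₁ then ε else (0:ℝ)) • w x = ε • w c₁ := by
        have : ∀ x : Fin C, (if x = c₁ then ε else (0:ℝ)) • w x
            = (if x = c₁ then ε • w x else 0) := by
          intro x; by_cases h : x = c₁ <;> simp [h]
        rw [Finset.sum_congr rfl (fun x _ => this x),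
          Finset.sum_ite_eq' univ c₁ (fun x => ε • w x), if_pos (mem_univ c₁)]
      have e3 : ∑ x : Fin C, (if x = c₂ then ε else (0:ℝ)) • w x = ε • w c₂ := by
        have : ∀ x : Fin C, (if x = c₂ then ε else (0:ℝ)) • w x
            = (if x = c₂ then ε • w x else 0) := by
          intro x; by_cases h : x = c₂ <;> simp [h]
        rw [Finset.sum_congr rfl (fun x _ => this x),
          Finset.sum_ite_eq' univ c₂ (fun x => ε • w x), if_pos (mem_univ c₂)]
      rw [e1, e2, e3, hS, zero_sub, smul_neg, smul_sub]
      abel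
    rw [hsum] at key
    have hrw : w c - (-(k • w c) + ε • (w c₁ - w c₂)) = (1+k) • w c + ε • v := by
      rw [hv, add_smul, one_smul, smul_sub, smul_sub]
      abel
    rw [hrw] at key
    -- square it
    have hnormsq : ‖(1+k) • w c + ε • v‖^2
        = 1 + 2*ε*((1+k) * (inner ℝ (w c) v : ℝ)) + ε^2*‖v‖^2 := by
      rw [norm_add_sq_real, real_inner_smul_left, real_inner_smul_right,
        norm_smul, norm_smul, Real.norm_eq_abs, Real.norm_eq_abs, mul_pow, mul_pow,
        sq_abs, sq_abs, hn c]
      have e0 : (1+k) * (((C:ℝ)-1)/C) = 1 := by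
        rw [hk]; field_simp; ring
      have e : (1+k)^2 * (((C:ℝ)-1)/C)^2 = 1 := by
        rw [← mul_pow, e0, one_pow]
      rw [e]; ring
    nlinarith [key, norm_nonneg ((1+k) • w c + ε • v)]
  have hvn := key_quad k hk0 _ (‖v‖^2) (by positivity) main
  have h1k : (0:ℝ) < 1 + k := by linarith
  have : (inner ℝ (w c) v : ℝ) = 0 := by
    rcases mul_eq_zero.mp hvn with h | h
    · linarith
    · exact h
  rw [hv, inner_sub_right] at this
  linarith


set_option maxHeartbeats 1000000 in
/-- Lemma H.3: `(w,b)` minimizes `Σ_c ‖w_c‖² + ‖b‖²` subject to `min_c L_c ≥ 1`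
iff the `w_c` form a regular `(C−1)`-simplex with `‖w_c‖ = (C−1)/C`,
`Σ_c w_c = 0` and `b = 0`. -/
theorem stmt_14 {d C : ℕ} (hC : 2 ≤ C) (hdC : C ≤ d)
    (w : Fin C → EuclideanSpace ℝ (Fin d)) (b : Fin C → ℝ) :
    ((∀ c, 1 ≤ ncL w b c) ∧
      ∀ (w' : Fin C → EuclideanSpace ℝ (Fin d)) (b' : Fin C → ℝ),
        (∀ c, 1 ≤ ncL w' b' c) →
        (∑ c, ‖w c‖ ^ 2) + ∑ c, b c ^ 2 ≤ (∑ c, ‖w' c‖ ^ 2) + ∑ c, b' c ^ 2) ↔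
    ((∀ c₁ c₂ : Fin C, c₁ ≠ c₂ →
        ‖w c₁ - w c₂‖ ^ 2 = 2 * ((C : ℝ) - 1) / C) ∧
      (∀ c, ‖w c‖ = ((C : ℝ) - 1) / C) ∧ (∑ c, w c) = 0 ∧ b = 0) := by
  have hC1 : (0:ℝ) < (C:ℝ) - 1 := by
    have : (2:ℝ) ≤ (C:ℝ) := by exact_mod_cast hC
    linarith
  have hC0 : (0:ℝ) < (C:ℝ) := by linarith
  have hCne : (C:ℝ) ≠ 0 := ne_of_gt hC0
  have hsumconst : ∑ _c : Fin C, (((C:ℝ)-1)/C)^2 = ((C:ℝ)-1)^2/C := by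
    rw [Finset.sum_const, card_univ, Fintype.card_fin, nsmul_eq_mul]
    field_simp
  constructor
  · rintro ⟨hfeas, hmin⟩
    have hF : ∀ c, Feas w b c := fun c => (ncL_ge_one_iff hC w b c).mp (hfeas c)
    -- comparison with the explicit ETF
    have hetfF : ∀ c, Feas (etf hdC) (0 : Fin C → ℝ) c :=
      feas_of_gram hC _ (etf_norm_sq hdC hC) (fun c₁ c₂ h => etf_inner_ne hdC hC h)
    have hetfncl : ∀ c, 1 ≤ ncL (etf hdC) 0 c :=
      fun c => (ncL_ge_one_iff hC _ _ c).mpr (hetfF c)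
    have hobj := hmin (etf hdC) 0 hetfncl
    have hetfobj : (∑ c, ‖etf hdC c‖^2) + ∑ c : Fin C, ((0 : Fin C → ℝ) c)^2
        = ((C:ℝ)-1)^2/C := by
      rw [Finset.sum_congr rfl (fun c _ => etf_norm_sq hdC hC c), hsumconst]
      simp
    rw [hetfobj] at hobj
    have hlb := lower_bound hC w b hF
    -- b = 0
    have hbsq : ∑ c, (b c)^2 ≤ 0 := by
      have hSnn : 0 ≤ ‖∑ c, w c‖^2 / C := by positivity
      linarith
    have hb0 : b = 0 := by
      funext c
      have h1 : ∀ c' ∈ univ, (0:ℝ) ≤ (b c')^2 := fun c' _ => sq_nonneg _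
      have h2 : ∑ c', (b c')^2 = 0 :=
        le_antisymm hbsq (Finset.sum_nonneg h1)
      have := (Finset.sum_eq_zero_iff_of_nonneg h1).mp h2 c (mem_univ c)
      exact pow_eq_zero_iff (n := 2) (by norm_num) |>.mp this
    subst hb0
    -- ∑ w = 0
    have hwsq : ∑ c, ‖w c‖^2 ≤ ((C:ℝ)-1)^2/C := by
      have : 0 ≤ ∑ c : Fin C, ((0 : Fin C → ℝ) c)^2 := by positivity
      calc ∑ c, ‖w c‖^2 ≤ (∑ c, ‖w c‖^2) + ∑ c : Fin C, ((0 : Fin C → ℝ) c)^2 := by linarith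
        _ ≤ ((C:ℝ)-1)^2/C := hobj
    have hS0 : (∑ c, w c) = 0 := by
      have h1 : ‖∑ c, w c‖^2 / C ≤ 0 := by linarith
      have h2 : 0 ≤ ‖∑ c, w c‖^2 / C := by positivity
      have h3 := le_antisymm h1 h2
      field_simp at h3
      simpa using h3
    -- norms
    have hni : ∀ c, (((C:ℝ)-1)/C)^2 ≤ ‖w c‖^2 := by
      intro c
      have h1 := uniform_constraint hC w 0 c (hF c)
      simp only [Pi.zero_apply, mul_zero, Finset.sum_const_zero, sub_zero] at h1
      rw [hS0, sub_zero, norm_smul, Real.norm_eq_abs, abs_of_pos hC0] at h1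
      have h2 : ((C:ℝ)-1)/C ≤ ‖w c‖ := by
        rw [div_le_iff₀ hC0]; linarith [h1]
      have h3 : (0:ℝ) ≤ ((C:ℝ)-1)/C := by positivity
      calc (((C:ℝ)-1)/C)^2 ≤ ‖w c‖ * (((C:ℝ)-1)/C) := by
            rw [pow_two]; exact mul_le_mul_of_nonneg_right h2 h3
        _ ≤ ‖w c‖^2 := by
            rw [pow_two]; exact mul_le_mul_of_nonneg_left h2 (norm_nonneg _)
    have hsum_eq : ∑ c : Fin C, (((C:ℝ)-1)/C)^2 = ∑ c, ‖w c‖^2 := by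
      rw [hsumconst]
      apply le_antisymm _ hwsq
      calc ((C:ℝ)-1)^2/C ≤ ((C:ℝ)-1)^2/C + ‖∑ c, w c‖^2 / C := by
            have : 0 ≤ ‖∑ c, w c‖^2 / C := by positivity
            linarith
        _ ≤ ∑ c, ‖w c‖^2 := hlb
    have hnsq : ∀ c, ‖w c‖^2 = (((C:ℝ)-1)/C)^2 := by
      intro c
      exact ((Finset.sum_eq_sum_iff_of_le (fun c _ => hni c)).mp hsum_eq c (mem_univ c)).symm
    have hn : ∀ c, ‖w c‖ = ((C:ℝ)-1)/C := by
      intro c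
      have h3 : (0:ℝ) ≤ ((C:ℝ)-1)/C := by positivity
      calc ‖w c‖ = Real.sqrt (‖w c‖^2) := (Real.sqrt_sq (norm_nonneg _)).symm
        _ = Real.sqrt ((((C:ℝ)-1)/C)^2) := by rw [hnsq c]
        _ = ((C:ℝ)-1)/C := Real.sqrt_sq h3
    -- inner products
    have hinner : ∀ c₁ c₂ : Fin C, c₁ ≠ c₂ →
        (inner ℝ (w c₁) (w c₂) : ℝ) = -(((C:ℝ)-1)/C^2) := by
      intro c₁ c₂ h12
      have hcard : ((univ.erase c₁).card : ℝ) = (C:ℝ) - 1 := by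
        rw [card_erase_of_mem (mem_univ c₁)]
        simp only [card_univ, Fintype.card_fin]
        have : 1 ≤ C := by omega
        push_cast [Nat.cast_sub this]
        ring
      have hzero : (inner ℝ (w c₁) (∑ c, w c) : ℝ) = 0 := by
        rw [hS0, inner_zero_right]
      rw [inner_sum] at hzero
      have hsplit : ∑ c', (inner ℝ (w c₁) (w c') : ℝ)
          = ‖w c₁‖^2 + ∑ c' ∈ univ.erase c₁, (inner ℝ (w c₁) (w c') : ℝ) := by
        rw [← real_inner_self_eq_norm_sq]
        exact (Finset.add_sum_erase univ _ (mem_univ c₁)).symm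
      have heq : ∀ c' ∈ univ.erase c₁, (inner ℝ (w c₁) (w c') : ℝ)
          = (inner ℝ (w c₁) (w c₂) : ℝ) := by
        intro c' hc'
        by_cases h : c' = c₂
        · rw [h]
        · exact inner_eq_of_min hC w hF hn hS0 (Finset.ne_of_mem_erase hc') (Ne.symm h12) h
      rw [hsplit, Finset.sum_congr rfl heq, Finset.sum_const, nsmul_eq_mul, hcard, hnsq c₁]
        at hzero
      have : ((C:ℝ)-1) * (inner ℝ (w c₁) (w c₂) : ℝ) = -((((C:ℝ)-1)/C)^2) := by linarith
      rw [show (-(((C:ℝ)-1)/C^2)) = -((((C:ℝ)-1)/C)^2) / ((C:ℝ)-1) from by field_simp]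
      rw [eq_div_iff (ne_of_gt hC1)]
      linarith
    refine ⟨?_, hn, hS0, rfl⟩
    intro c₁ c₂ h12
    rw [norm_sub_sq_real, hinner c₁ c₂ h12, hnsq c₁, hnsq c₂]
    field_simp
    ring
  · rintro ⟨hdist, hn, hS, hb⟩
    subst hb
    have hnsq : ∀ c, ‖w c‖^2 = (((C:ℝ)-1)/C)^2 := fun c => by rw [hn c]
    have hg : ∀ c₁ c₂ : Fin C, c₁ ≠ c₂ →
        (inner ℝ (w c₁) (w c₂) : ℝ) = -(((C:ℝ)-1)/C^2) :=
      fun c₁ c₂ h => inner_of_dist hC w hn hdist h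
    have hF : ∀ c, Feas w 0 c := feas_of_gram hC w hnsq hg
    refine ⟨fun c => (ncL_ge_one_iff hC w 0 c).mpr (hF c), ?_⟩
    intro w' b' hfeas'
    have hF' : ∀ c, Feas w' b' c := fun c => (ncL_ge_one_iff hC w' b' c).mp (hfeas' c)
    have hlb := lower_bound hC w' b' hF'
    have hobj : (∑ c, ‖w c‖^2) + ∑ c : Fin C, ((0 : Fin C → ℝ) c)^2 = ((C:ℝ)-1)^2/C := by
      rw [Finset.sum_congr rfl (fun c _ => hnsq c), hsumconst]
      simp
    rw [hobj]
    have h1 : 0 ≤ ‖∑ c, w' c‖^2 / C := by positivity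
    have h2 : 0 ≤ ∑ c, (b' c)^2 := by positivity
    linarith
end

section
/- Let f : ℝ^d × ℝ^m → ℝ be a function. Define S = { λ ∈ ℝ^m : λ_i ≥ 0 for all i, and f(x; e^{α diag(λ)} θ) = e^{α} f(x; θ) for all α ∈ ℝ, x ∈ ℝ^d and θ ∈ ℝ^m }, the set of nonnegative scaling vectors λ with respect to which f is λ-quasi-homogeneous. Then S is a convex subset of ℝ^m. -/
open Real

def IsQuasiHomogeneous {X ι E : Type*} [AddCommGroup E] [Module ℝ E]
    (f : X → (ι → ℝ) → E) (l : ι → ℝ) : Prop :=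
  ∀ (α : ℝ) (x : X) (θ : ι → ℝ), f x (fun i => exp (α * l i) * θ i) = exp α • f x θ

namespace IsQuasiHomogeneous

variable {X ι E : Type*} [AddCommGroup E] [Module ℝ E] {f : X → (ι → ℝ) → E}

/-- Scaling by `a • l + b • μ` is scaling by `a • l` after scaling by `b • μ`,
and `exp (α * a) • exp (α * b) = exp α` since `a + b = 1`. -/
theorem affine_combination {l μ : ι → ℝ} (hl : IsQuasiHomogeneous f l)
    (hμ : IsQuasiHomogeneous f μ) {a b : ℝ} (hab : a + b = 1) :
    IsQuasiHomogeneous f (a • l + b • μ) := by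
  intro α x θ
  have hscale : (fun i => exp (α * (a • l + b • μ) i) * θ i)
      = fun i => exp (α * a * l i) * (exp (α * b * μ i) * θ i) := by
    funext i
    rw [← mul_assoc, ← exp_add]
    congr 2
    simp only [Pi.add_apply, Pi.smul_apply, smul_eq_mul]
    ring
  rw [hscale, hl (α * a) x, hμ (α * b) x, smul_smul, ← exp_add, ← mul_add, hab, mul_one]

theorem convex_setOf (f : X → (ι → ℝ) → E) : Convex ℝ {l | IsQuasiHomogeneous f l} :=
  fun _ hl _ hμ _ _ _ _ hab => hl.affine_combination hμ hab

end IsQuasiHomogeneous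

/-- Lemma B.1: the set `S` of nonnegative scaling vectors `λ` with respect to
which a fixed model `f` is `λ`-quasi-homogeneous is convex. -/
theorem stmt_18 {d m : ℕ} (f : (Fin d → ℝ) → (Fin m → ℝ) → ℝ) :
    Convex ℝ {l : Fin m → ℝ | (∀ i, 0 ≤ l i) ∧
      ∀ (α : ℝ) (x : Fin d → ℝ) (θ : Fin m → ℝ),
        f x (fun i => Real.exp (α * l i) * θ i) = Real.exp α * f x θ} :=
  (convex_Ici 0).inter (IsQuasiHomogeneous.convex_setOf f)
end
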